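/- arXiv:2005.04476 — 6 statements merged into one kernel-verified Lean document; each statement's English description precedes it below -/
import Mathlib

section
/- There exists a constant C > 0, depending only on a₀ and C_B, such that for every ε > 0, every real m ≥ 0, every real θ ≥ 1, and all u, v, z ∈ V with |u| ≤ m + 1: |⟨B(u,v),z⟩| ≤ C ε⁻³ (m+1)² |z|² ‖u‖² + 2ε ‖v − u‖² + 2ε ‖u‖² θ² + ε ‖z‖². -/
lemma young6 (p q δ : ℝ) (hδ : 0 < δ) : p * q ≤ p ^ 2 / (4 * δ) + δ * q ^ 2 := by
  have h : p * q - δ * q ^ 2 ≤ p ^ 2 / (4 * δ) := by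
    rw [le_div_iff₀ (by positivity)]
    nlinarith [sq_nonneg (p - 2 * δ * q)]
  linarith

lemma scalar6 (cb a0 ε m θ x y nu nv nz hz d b : ℝ)
    (hcb : 0 < cb) (ha0 : 0 < a0) (hε : 0 < ε) (hm : 0 ≤ m) (hθ : 1 ≤ θ)
    (hx : 0 ≤ x) (hy : 0 ≤ y) (hnu : 0 ≤ nu) (hnz : 0 ≤ nz)
    (hhz : 0 ≤ hz) (hd : 0 ≤ d)
    (hx2 : x ^ 2 ≤ a0 * (m + 1) * nu) (hy2 : y ^ 2 ≤ a0 * hz * nz)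
    (hb : b ≤ cb * x * nv * y) (hv : nv ≤ d + nu) :
    b ≤ (cb ^ 4 * a0 ^ 4 / 16) * (ε ^ 3)⁻¹ * (m + 1) ^ 2 * hz ^ 2 * nu ^ 2
      + 2 * ε * d ^ 2 + 2 * ε * nu ^ 2 * θ ^ 2 + ε * nz ^ 2 := by
  have hx4 : x ^ 4 ≤ a0 ^ 2 * (m + 1) ^ 2 * nu ^ 2 := by
    have h := mul_le_mul hx2 hx2 (sq_nonneg x) (by positivity : (0:ℝ) ≤ a0 * (m + 1) * nu)
    calc x ^ 4 = x ^ 2 * x ^ 2 := by ring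
      _ ≤ (a0 * (m + 1) * nu) * (a0 * (m + 1) * nu) := h
      _ = a0 ^ 2 * (m + 1) ^ 2 * nu ^ 2 := by ring
  have key : ∀ A : ℝ, 0 ≤ A →
      cb * x * y * A ≤ (cb ^ 4 * a0 ^ 4 / 32) * (ε ^ 3)⁻¹ * (m + 1) ^ 2 * hz ^ 2 * nu ^ 2
        + ε * A ^ 2 + (ε / 2) * nz ^ 2 := by
    intro A hA
    have h1 : cb * x * y * A ≤ (cb * x * y) ^ 2 / (4 * ε) + ε * A ^ 2 :=
      young6 _ _ _ hε
    have h2 : (cb * x * y) ^ 2 / (4 * ε) ≤ (cb ^ 2 * x ^ 2 * a0 * hz / (4 * ε)) * nz := by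
      rw [show (cb ^ 2 * x ^ 2 * a0 * hz / (4 * ε)) * nz
          = (cb ^ 2 * x ^ 2 * (a0 * hz * nz)) / (4 * ε) by ring]
      apply div_le_div_of_nonneg_right ?_ (by positivity)
      nlinarith [mul_le_mul_of_nonneg_left hy2 (show (0:ℝ) ≤ cb ^ 2 * x ^ 2 by positivity)]
    have h3 : (cb ^ 2 * x ^ 2 * a0 * hz / (4 * ε)) * nz
        ≤ (cb ^ 2 * x ^ 2 * a0 * hz / (4 * ε)) ^ 2 / (2 * ε) + (ε / 2) * nz ^ 2 := by
      have := young6 (cb ^ 2 * x ^ 2 * a0 * hz / (4 * ε)) nz (ε / 2) (by positivity)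
      rw [show 4 * (ε / 2) = 2 * ε by ring] at this
      exact this
    have h4 : (cb ^ 2 * x ^ 2 * a0 * hz / (4 * ε)) ^ 2 / (2 * ε)
        ≤ (cb ^ 4 * a0 ^ 4 / 32) * (ε ^ 3)⁻¹ * (m + 1) ^ 2 * hz ^ 2 * nu ^ 2 := by
      have e1 : (cb ^ 2 * x ^ 2 * a0 * hz / (4 * ε)) ^ 2 / (2 * ε)
          = cb ^ 4 * a0 ^ 2 * hz ^ 2 / (32 * ε ^ 3) * x ^ 4 := by
        field_simp; ring
      have e2 : (cb ^ 4 * a0 ^ 4 / 32) * (ε ^ 3)⁻¹ * (m + 1) ^ 2 * hz ^ 2 * nu ^ 2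
          = cb ^ 4 * a0 ^ 2 * hz ^ 2 / (32 * ε ^ 3) * (a0 ^ 2 * (m + 1) ^ 2 * nu ^ 2) := by
        field_simp
      rw [e1, e2]
      exact mul_le_mul_of_nonneg_left hx4 (by positivity)
    linarith
  have hA2 : nv ≤ d + θ * nu := by nlinarith
  have hb2 : b ≤ cb * x * y * d + cb * x * y * (θ * nu) := by
    have h0 : (0:ℝ) ≤ cb * x * y := by positivity
    nlinarith [mul_le_mul_of_nonneg_left hA2 h0]
  have k1 := key d hd
  have k2 := key (θ * nu) (by positivity)
  have e3 : ε * (θ * nu) ^ 2 = ε * nu ^ 2 * θ ^ 2 := by ring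
  rw [e3] at k2
  have p1 : 0 ≤ ε * d ^ 2 := by positivity
  have p2 : 0 ≤ ε * nu ^ 2 * θ ^ 2 := by positivity
  linarith


/-- There exists a constant `C > 0`, depending only on `a₀` and `C_B`,
such that for every `ε > 0`, every real `m ≥ 0`, every real `θ ≥ 1`, and all
`u, v, z ∈ V` with `|u| ≤ m + 1`:
`|⟨B(u,v),z⟩| ≤ C ε⁻³ (m+1)² |z|² ‖u‖² + 2ε ‖v − u‖² + 2ε ‖u‖² θ² + ε ‖z‖²`. -/
theorem stmt6
    {H V Q : Type*}
    [NormedAddCommGroup H] [InnerProductSpace ℝ H] [TopologicalSpace.SeparableSpace H]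
    [NormedAddCommGroup V] [InnerProductSpace ℝ V] [TopologicalSpace.SeparableSpace V]
    [NormedAddCommGroup Q] [NormedSpace ℝ Q]
    (jH : V →L[ℝ] H) (hjH : Function.Injective jH)
    (jQ : V →L[ℝ] Q) (hjQ : Function.Injective jQ)
    (a₀ : ℝ) (ha₀ : 0 < a₀)
    (hQnorm : ∀ v : V, ‖jQ v‖ ^ 2 ≤ a₀ * ‖jH v‖ * ‖v‖)
    (B : V →L[ℝ] V →L[ℝ] V →L[ℝ] ℝ)
    (C_B : ℝ) (hC_B : 0 < C_B)
    (hB : ∀ u v w : V, |B u v w| ≤ C_B * ‖jQ u‖ * ‖v‖ * ‖jQ w‖) :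
    ∃ C : ℝ, 0 < C ∧ ∀ ε : ℝ, 0 < ε → ∀ m θ : ℝ, 0 ≤ m → 1 ≤ θ →
      ∀ u v z : V, ‖jH u‖ ≤ m + 1 →
      |B u v z| ≤ C * ε ^ (-(3:ℝ)) * (m + 1) ^ 2 * ‖jH z‖ ^ 2 * ‖u‖ ^ 2
        + 2 * ε * ‖v - u‖ ^ 2 + 2 * ε * ‖u‖ ^ 2 * θ ^ 2 + ε * ‖z‖ ^ 2 := by
  refine ⟨C_B ^ 4 * a₀ ^ 4 / 16, by positivity, ?_⟩
  intro ε hε m θ hm hθ u v z hu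
  have hr : ε ^ (-(3:ℝ)) = (ε ^ 3)⁻¹ := by
    rw [show (-(3:ℝ)) = -((3:ℕ):ℝ) by norm_num, Real.rpow_neg hε.le, Real.rpow_natCast]
  rw [hr]
  have hx2 : ‖jQ u‖ ^ 2 ≤ a₀ * (m + 1) * ‖u‖ := by
    have h := hQnorm u
    nlinarith [mul_le_mul_of_nonneg_left hu (mul_nonneg ha₀.le (norm_nonneg u))]
  have hy2 : ‖jQ z‖ ^ 2 ≤ a₀ * ‖jH z‖ * ‖z‖ := hQnorm z
  have hv : ‖v‖ ≤ ‖v - u‖ + ‖u‖ := by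
    calc ‖v‖ = ‖(v - u) + u‖ := by rw [sub_add_cancel]
      _ ≤ ‖v - u‖ + ‖u‖ := norm_add_le _ _
  exact scalar6 C_B a₀ ε m θ ‖jQ u‖ ‖jQ z‖ ‖u‖ ‖v‖ ‖z‖ ‖jH z‖ ‖v - u‖ |B u v z|
    hC_B ha₀ hε hm hθ (norm_nonneg _) (norm_nonneg _) (norm_nonneg _) (norm_nonneg _)
    (norm_nonneg _) (norm_nonneg _) hx2 hy2 (hB u v z) hv
end

section
/- There exists a constant C > 0, depending only on a₀ and C_B, such that for all ε > 0, δ > 0, p > 0, every real m ≥ 0, every real θ ≥ δ, and all u, z ∈ V with |u| ≤ m + 1: |⟨B(u,u),z⟩| ≤ C ε⁻³ δ^{-4p} (m+1)² ‖u‖² |z|² + ε ‖z‖² + C ε δ^{2(p−1)} ‖u‖² θ². -/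
/-- AM-GM type bound: `a*b*c² ≤ (a+b+c)⁴` for nonnegatives. -/
lemma stmt7_aux (a b c : ℝ) (ha : 0 ≤ a) (hb : 0 ≤ b) (hc : 0 ≤ c) :
    a * b * c ^ 2 ≤ (a + b + c) ^ 4 := by
  have hs : 0 ≤ a + b + c := by linarith
  have h1 : a * b ≤ (a + b + c) * (a + b + c) :=
    mul_le_mul (by linarith) (by linarith) hb hs
  have h2 : c ^ 2 ≤ (a + b + c) ^ 2 := pow_le_pow_left₀ hc (by linarith) 2
  calc a * b * c ^ 2 ≤ ((a + b + c) * (a + b + c)) * (a + b + c) ^ 2 :=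
        mul_le_mul h1 h2 (sq_nonneg c) (mul_nonneg hs hs)
    _ = (a + b + c) ^ 4 := by ring

theorem stmt7
    {H V Q : Type*}
    [NormedAddCommGroup H] [InnerProductSpace ℝ H] [TopologicalSpace.SeparableSpace H]
    [NormedAddCommGroup V] [InnerProductSpace ℝ V] [TopologicalSpace.SeparableSpace V]
    [NormedAddCommGroup Q] [NormedSpace ℝ Q]
    (jH : V →L[ℝ] H) (hjH : Function.Injective jH)
    (jQ : V →L[ℝ] Q) (hjQ : Function.Injective jQ)
    (a₀ : ℝ) (ha₀ : 0 < a₀)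
    (hQnorm : ∀ v : V, ‖jQ v‖ ^ 2 ≤ a₀ * ‖jH v‖ * ‖v‖)
    (B : V →L[ℝ] V →L[ℝ] V →L[ℝ] ℝ)
    (C_B : ℝ) (hC_B : 0 < C_B)
    (hB : ∀ u v w : V, |B u v w| ≤ C_B * ‖jQ u‖ * ‖v‖ * ‖jQ w‖) :
    ∃ C : ℝ, 0 < C ∧ ∀ ε δ p : ℝ, 0 < ε → 0 < δ → 0 < p → ∀ m θ : ℝ, 0 ≤ m → δ ≤ θ →
      ∀ u z : V, ‖jH u‖ ≤ m + 1 →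
      |B u u z| ≤ C * ε ^ (-(3:ℝ)) * δ ^ (-(4 * p)) * (m + 1) ^ 2 * ‖u‖ ^ 2 * ‖jH z‖ ^ 2
        + ε * ‖z‖ ^ 2 + C * ε * δ ^ (2 * (p - 1)) * ‖u‖ ^ 2 * θ ^ 2 := by
  refine ⟨(1 + C_B * a₀) ^ 4, by positivity, ?_⟩
  intro ε δ p hε hδ hp m θ hm hθ u z hu
  set C : ℝ := (1 + C_B * a₀) ^ 4 with hCdef
  have hC : 0 < C := by positivity
  have hεr : 0 < ε ^ (-(3:ℝ)) := Real.rpow_pos_of_pos hε _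
  have hδr1 : 0 < δ ^ (-(4 * p)) := Real.rpow_pos_of_pos hδ _
  have hδr2 : 0 < δ ^ (2 * (p - 1)) := Real.rpow_pos_of_pos hδ _
  set a : ℝ := C * ε ^ (-(3:ℝ)) * δ ^ (-(4 * p)) * (m + 1) ^ 2 * ‖u‖ ^ 2 * ‖jH z‖ ^ 2 with hadef
  set b : ℝ := ε * ‖z‖ ^ 2 with hbdef
  set c : ℝ := C * ε * δ ^ (2 * (p - 1)) * ‖u‖ ^ 2 * δ ^ 2 with hcdef
  have ha : 0 ≤ a := by
    rw [hadef]
    have h1 : 0 ≤ C * ε ^ (-(3:ℝ)) := mul_nonneg hC.le hεr.le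
    have h2 : 0 ≤ C * ε ^ (-(3:ℝ)) * δ ^ (-(4 * p)) := mul_nonneg h1 hδr1.le
    positivity
  have hb : 0 ≤ b := by rw [hbdef]; positivity
  have hc : 0 ≤ c := by
    rw [hcdef]
    have h2 : 0 ≤ C * ε * δ ^ (2 * (p - 1)) := mul_nonneg (by positivity) hδr2.le
    positivity
  -- Step 1: the quartic bound on |B u u z|
  have h1 : |B u u z| ≤ C_B * ‖jQ u‖ * ‖u‖ * ‖jQ z‖ := hB u u z
  have h2 : |B u u z| ^ 4 ≤ (C_B * ‖jQ u‖ * ‖u‖ * ‖jQ z‖) ^ 4 :=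
    pow_le_pow_left₀ (abs_nonneg _) h1 4
  have hqu : ‖jQ u‖ ^ 2 ≤ a₀ * (m + 1) * ‖u‖ :=
    (hQnorm u).trans (mul_le_mul_of_nonneg_right
      (mul_le_mul_of_nonneg_left hu ha₀.le) (norm_nonneg u))
  have hqz : ‖jQ z‖ ^ 2 ≤ a₀ * ‖jH z‖ * ‖z‖ := hQnorm z
  have hX4 : |B u u z| ^ 4 ≤ C_B ^ 4 * a₀ ^ 4 * (m + 1) ^ 2 * ‖u‖ ^ 6 * ‖jH z‖ ^ 2 * ‖z‖ ^ 2 := by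
    calc |B u u z| ^ 4 ≤ (C_B * ‖jQ u‖ * ‖u‖ * ‖jQ z‖) ^ 4 := h2
      _ = C_B ^ 4 * (‖jQ u‖ ^ 2) ^ 2 * ‖u‖ ^ 4 * (‖jQ z‖ ^ 2) ^ 2 := by ring
      _ ≤ C_B ^ 4 * (a₀ * (m + 1) * ‖u‖) ^ 2 * ‖u‖ ^ 4 * (a₀ * ‖jH z‖ * ‖z‖) ^ 2 := by
          gcongr <;> positivity
      _ = C_B ^ 4 * a₀ ^ 4 * (m + 1) ^ 2 * ‖u‖ ^ 6 * ‖jH z‖ ^ 2 * ‖z‖ ^ 2 := by ring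
  -- Step 2: the product identity
  have e1 : ε ^ (-(3:ℝ)) * ε ^ (3:ℕ) = 1 := by
    rw [← Real.rpow_natCast ε 3, ← Real.rpow_add hε]
    norm_num
  have e2 : δ ^ (-(4 * p)) * (δ ^ (2 * (p - 1))) ^ (2:ℕ) * (δ ^ (2:ℕ)) ^ (2:ℕ) = 1 := by
    rw [← Real.rpow_natCast (δ ^ (2 * (p - 1))) 2, ← Real.rpow_mul hδ.le,
      ← pow_mul, ← Real.rpow_natCast δ (2 * 2),
      ← Real.rpow_add hδ, ← Real.rpow_add hδ]
    push_cast
    rw [show -(4 * p) + 2 * (p - 1) * 2 + (4 : ℝ) = 0 by ring, Real.rpow_zero]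
  have hkey : a * b * c ^ 2 = C ^ 3 * (m + 1) ^ 2 * ‖u‖ ^ 6 * ‖jH z‖ ^ 2 * ‖z‖ ^ 2 := by
    calc a * b * c ^ 2
        = (C ^ 3 * (m + 1) ^ 2 * ‖u‖ ^ 6 * ‖jH z‖ ^ 2 * ‖z‖ ^ 2) *
            (ε ^ (-(3:ℝ)) * ε ^ (3:ℕ)) *
            (δ ^ (-(4 * p)) * (δ ^ (2 * (p - 1))) ^ (2:ℕ) * (δ ^ (2:ℕ)) ^ (2:ℕ)) := by
          rw [hadef, hbdef, hcdef]; ring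
      _ = C ^ 3 * (m + 1) ^ 2 * ‖u‖ ^ 6 * ‖jH z‖ ^ 2 * ‖z‖ ^ 2 := by rw [e1, e2]; ring
  -- Step 3: C_B^4 * a₀^4 ≤ C^3
  have hCC : C_B ^ 4 * a₀ ^ 4 ≤ C ^ 3 := by
    have hx : 0 ≤ C_B * a₀ := by positivity
    have h1x : (1:ℝ) ≤ 1 + C_B * a₀ := by linarith
    have hxcube : C_B * a₀ ≤ (1 + C_B * a₀) ^ 3 :=
      le_trans (by linarith) (le_self_pow₀ h1x (by norm_num))
    have h4 : (C_B * a₀) ^ 4 ≤ ((1 + C_B * a₀) ^ 3) ^ 4 := pow_le_pow_left₀ hx hxcube 4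
    calc C_B ^ 4 * a₀ ^ 4 = (C_B * a₀) ^ 4 := by ring
      _ ≤ ((1 + C_B * a₀) ^ 3) ^ 4 := h4
      _ = C ^ 3 := by rw [hCdef]; ring
  -- Step 4: conclude |B u u z| ≤ a + b + c
  have hmain : |B u u z| ≤ a + b + c := by
    have h5 : |B u u z| ^ 4 ≤ (a + b + c) ^ 4 := by
      calc |B u u z| ^ 4
          ≤ C_B ^ 4 * a₀ ^ 4 * (m + 1) ^ 2 * ‖u‖ ^ 6 * ‖jH z‖ ^ 2 * ‖z‖ ^ 2 := hX4
        _ = (C_B ^ 4 * a₀ ^ 4) * ((m + 1) ^ 2 * ‖u‖ ^ 6 * ‖jH z‖ ^ 2 * ‖z‖ ^ 2) := by ring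
        _ ≤ C ^ 3 * ((m + 1) ^ 2 * ‖u‖ ^ 6 * ‖jH z‖ ^ 2 * ‖z‖ ^ 2) :=
            mul_le_mul_of_nonneg_right hCC (by positivity)
        _ = a * b * c ^ 2 := by rw [hkey]; ring
        _ ≤ (a + b + c) ^ 4 := stmt7_aux a b c ha hb hc
    exact le_of_pow_le_pow_left₀ (by norm_num) (by linarith) h5
  -- Step 5: replace δ² by θ²
  have hδθ : c ≤ C * ε * δ ^ (2 * (p - 1)) * ‖u‖ ^ 2 * θ ^ 2 := by
    rw [hcdef]
    have hδ2 : δ ^ 2 ≤ θ ^ 2 := pow_le_pow_left₀ hδ.le hθ 2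
    have hpre : 0 ≤ C * ε * δ ^ (2 * (p - 1)) * ‖u‖ ^ 2 :=
      mul_nonneg (mul_nonneg (mul_nonneg hC.le hε.le) hδr2.le) (by positivity)
    exact mul_le_mul_of_nonneg_left hδ2 hpre
  linarith
end

section
/- There exists a constant C > 0, depending only on a₀ and C_B, such that for all ε > 0, δ > 0, p > 0, every real m ≥ 0, every real θ ≥ δ, and all u, v, z ∈ V with |u| ≤ m + 1: |⟨B(u,v),z⟩| ≤ C δ^{-4p} (m+1)² |z|² ‖u‖² + ε ‖z‖² + 2 ε^{-1/2} δ^{2p} ‖v − u‖² + 2 ε^{-1/2} δ^{2p−2} θ² ‖u‖². -/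
lemma young3 {x y z : ℝ} (hx : 0 ≤ x) (hy : 0 ≤ y) (hz : 0 ≤ z) :
    x * y * z ≤ x ^ 4 / 4 + y ^ 4 / 4 + z ^ 2 / 2 := by
  nlinarith [sq_nonneg (x * y - z), sq_nonneg (x ^ 2 - y ^ 2), mul_nonneg hx hy]

set_option maxHeartbeats 1000000 in
lemma aux_ineq (K d1 e1 A U Z W D M q r w : ℝ)
    (hK : 0 < K) (hd1 : 0 < d1) (he1 : 0 < e1)
    (hU0 : 0 ≤ U) (hZ0 : 0 ≤ Z) (hW0 : 0 ≤ W) (hD0 : 0 ≤ D)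
    (hA0 : 0 ≤ A) (hAM : A ≤ M)
    (hq : d1 ^ 2 ≤ q)
    (hr0 : 0 ≤ r) (hw0 : 0 ≤ w) (hr2 : r ^ 2 = A * U * Z) (hw2 : w ^ 2 = W) :
    K * (r * w) * D + K * (r * w) * U ≤
      (K ^ 4 / 2 + 1) * (d1 ^ 4)⁻¹ * M ^ 2 * Z ^ 2 * U ^ 2 + e1 ^ 4 * W ^ 2
        + 2 * (e1 ^ 2)⁻¹ * d1 ^ 2 * D ^ 2 + 2 * (e1 ^ 2)⁻¹ * q * U ^ 2 := by
  have hM0 : 0 ≤ M := hA0.trans hAM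
  have y1 : K * (r * w) * D ≤
      K ^ 4 * (A * U * Z) ^ 2 / (4 * d1 ^ 4) + e1 ^ 4 * W ^ 2 / 4
        + d1 ^ 2 / e1 ^ 2 * D ^ 2 / 2 := by
    have h := young3 (x := K / d1 * r) (y := e1 * w) (z := d1 / e1 * D)
      (by positivity) (by positivity) (by positivity)
    have heq : (K / d1 * r) * (e1 * w) * (d1 / e1 * D) = K * (r * w) * D := by
      field_simp
    rw [heq] at h
    calc K * (r * w) * D
        ≤ (K / d1 * r) ^ 4 / 4 + (e1 * w) ^ 4 / 4 + (d1 / e1 * D) ^ 2 / 2 := h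
      _ = K ^ 4 * (r ^ 2) ^ 2 / (4 * d1 ^ 4) + e1 ^ 4 * (w ^ 2) ^ 2 / 4
          + d1 ^ 2 / e1 ^ 2 * D ^ 2 / 2 := by field_simp
      _ = K ^ 4 * (A * U * Z) ^ 2 / (4 * d1 ^ 4) + e1 ^ 4 * W ^ 2 / 4
          + d1 ^ 2 / e1 ^ 2 * D ^ 2 / 2 := by rw [hr2, hw2]
  have y2 : K * (r * w) * U ≤
      K ^ 4 * (A * U * Z) ^ 2 / (4 * d1 ^ 4) + e1 ^ 4 * W ^ 2 / 4
        + d1 ^ 2 / e1 ^ 2 * U ^ 2 / 2 := by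
    have h := young3 (x := K / d1 * r) (y := e1 * w) (z := d1 / e1 * U)
      (by positivity) (by positivity) (by positivity)
    have heq : (K / d1 * r) * (e1 * w) * (d1 / e1 * U) = K * (r * w) * U := by
      field_simp
    rw [heq] at h
    calc K * (r * w) * U
        ≤ (K / d1 * r) ^ 4 / 4 + (e1 * w) ^ 4 / 4 + (d1 / e1 * U) ^ 2 / 2 := h
      _ = K ^ 4 * (r ^ 2) ^ 2 / (4 * d1 ^ 4) + e1 ^ 4 * (w ^ 2) ^ 2 / 4
          + d1 ^ 2 / e1 ^ 2 * U ^ 2 / 2 := by field_simp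
      _ = K ^ 4 * (A * U * Z) ^ 2 / (4 * d1 ^ 4) + e1 ^ 4 * W ^ 2 / 4
          + d1 ^ 2 / e1 ^ 2 * U ^ 2 / 2 := by rw [hr2, hw2]
  -- per-term comparisons
  have h1 : (A * U * Z) ^ 2 ≤ M ^ 2 * (Z ^ 2 * U ^ 2) := by
    have hA2 : A ^ 2 ≤ M ^ 2 := by nlinarith
    have := mul_le_mul_of_nonneg_right hA2 (sq_nonneg (U * Z))
    nlinarith [this]
  have t1 : K ^ 4 * (A * U * Z) ^ 2 / (4 * d1 ^ 4) + K ^ 4 * (A * U * Z) ^ 2 / (4 * d1 ^ 4)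
      ≤ (K ^ 4 / 2 + 1) * (d1 ^ 4)⁻¹ * M ^ 2 * Z ^ 2 * U ^ 2 := by
    have hX : (0 : ℝ) ≤ (d1 ^ 4)⁻¹ * (M ^ 2 * (Z ^ 2 * U ^ 2)) := by positivity
    have step1 : K ^ 4 / 2 * ((d1 ^ 4)⁻¹ * (A * U * Z) ^ 2)
        ≤ K ^ 4 / 2 * ((d1 ^ 4)⁻¹ * (M ^ 2 * (Z ^ 2 * U ^ 2))) := by
      apply mul_le_mul_of_nonneg_left _ (by positivity)
      exact mul_le_mul_of_nonneg_left h1 (by positivity)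
    have step2 : K ^ 4 / 2 * ((d1 ^ 4)⁻¹ * (M ^ 2 * (Z ^ 2 * U ^ 2)))
        ≤ (K ^ 4 / 2 + 1) * ((d1 ^ 4)⁻¹ * (M ^ 2 * (Z ^ 2 * U ^ 2))) :=
      mul_le_mul_of_nonneg_right (by linarith) hX
    calc K ^ 4 * (A * U * Z) ^ 2 / (4 * d1 ^ 4) + K ^ 4 * (A * U * Z) ^ 2 / (4 * d1 ^ 4)
        = K ^ 4 / 2 * ((d1 ^ 4)⁻¹ * (A * U * Z) ^ 2) := by ring
      _ ≤ (K ^ 4 / 2 + 1) * ((d1 ^ 4)⁻¹ * (M ^ 2 * (Z ^ 2 * U ^ 2))) := step1.trans step2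
      _ = (K ^ 4 / 2 + 1) * (d1 ^ 4)⁻¹ * M ^ 2 * Z ^ 2 * U ^ 2 := by ring
  have t2 : e1 ^ 4 * W ^ 2 / 4 + e1 ^ 4 * W ^ 2 / 4 ≤ e1 ^ 4 * W ^ 2 := by
    have : (0:ℝ) ≤ e1 ^ 4 * W ^ 2 := by positivity
    linarith
  have t3 : d1 ^ 2 / e1 ^ 2 * D ^ 2 / 2 ≤ 2 * (e1 ^ 2)⁻¹ * d1 ^ 2 * D ^ 2 := by
    have hX : (0:ℝ) ≤ (e1 ^ 2)⁻¹ * d1 ^ 2 * D ^ 2 := by positivity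
    have he : d1 ^ 2 / e1 ^ 2 * D ^ 2 / 2 = 1 / 2 * ((e1 ^ 2)⁻¹ * d1 ^ 2 * D ^ 2) := by ring
    linarith [he ▸ (by linarith : (1:ℝ)/2 * ((e1 ^ 2)⁻¹ * d1 ^ 2 * D ^ 2) ≤ 2 * ((e1 ^ 2)⁻¹ * d1 ^ 2 * D ^ 2))]
  have t4 : d1 ^ 2 / e1 ^ 2 * U ^ 2 / 2 ≤ 2 * (e1 ^ 2)⁻¹ * q * U ^ 2 := by
    have hcoef : d1 ^ 2 / e1 ^ 2 / 2 ≤ 2 * (e1 ^ 2)⁻¹ * q := by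
      have h2 : (0:ℝ) < (e1 ^ 2)⁻¹ := by positivity
      have : d1 ^ 2 / e1 ^ 2 / 2 = 1 / 2 * ((e1 ^ 2)⁻¹ * d1 ^ 2) := by ring
      rw [this]
      have hA' : (e1 ^ 2)⁻¹ * d1 ^ 2 ≤ (e1 ^ 2)⁻¹ * q := mul_le_mul_of_nonneg_left hq h2.le
      have hq0 : (0:ℝ) ≤ q := le_trans (by positivity) hq
      have hy0 : (0:ℝ) ≤ (e1 ^ 2)⁻¹ * q := mul_nonneg h2.le hq0
      linarith
    calc d1 ^ 2 / e1 ^ 2 * U ^ 2 / 2 = d1 ^ 2 / e1 ^ 2 / 2 * U ^ 2 := by ring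
      _ ≤ 2 * (e1 ^ 2)⁻¹ * q * U ^ 2 := mul_le_mul_of_nonneg_right hcoef (sq_nonneg U)
  linarith [y1, y2, t1, t2, t3, t4]

set_option maxHeartbeats 1000000 in
/-- There exists a constant `C > 0`, depending only on `a₀` and `C_B`,
such that for all `ε > 0`, `δ > 0`, `p > 0`, every real `m ≥ 0`, every real `θ ≥ δ`,
and all `u, v, z ∈ V` with `|u| ≤ m + 1`:
`|⟨B(u,v),z⟩| ≤ C δ^{-4p} (m+1)² |z|² ‖u‖² + ε ‖z‖² + 2 ε^{-1/2} δ^{2p} ‖v − u‖²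
  + 2 ε^{-1/2} δ^{2p−2} θ² ‖u‖²`. -/
theorem stmt8
    {H V Q : Type*}
    [NormedAddCommGroup H] [InnerProductSpace ℝ H] [TopologicalSpace.SeparableSpace H]
    [NormedAddCommGroup V] [InnerProductSpace ℝ V] [TopologicalSpace.SeparableSpace V]
    [NormedAddCommGroup Q] [NormedSpace ℝ Q]
    (jH : V →L[ℝ] H) (hjH : Function.Injective jH)
    (jQ : V →L[ℝ] Q) (hjQ : Function.Injective jQ)
    (a₀ : ℝ) (ha₀ : 0 < a₀)
    (hQnorm : ∀ v : V, ‖jQ v‖ ^ 2 ≤ a₀ * ‖jH v‖ * ‖v‖)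
    (B : V →L[ℝ] V →L[ℝ] V →L[ℝ] ℝ)
    (C_B : ℝ) (hC_B : 0 < C_B)
    (hB : ∀ u v w : V, |B u v w| ≤ C_B * ‖jQ u‖ * ‖v‖ * ‖jQ w‖) :
    ∃ C : ℝ, 0 < C ∧ ∀ ε δ p : ℝ, 0 < ε → 0 < δ → 0 < p → ∀ m θ : ℝ, 0 ≤ m → δ ≤ θ →
      ∀ u v z : V, ‖jH u‖ ≤ m + 1 →
      |B u v z| ≤ C * δ ^ (-(4 * p)) * (m + 1) ^ 2 * ‖jH z‖ ^ 2 * ‖u‖ ^ 2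
        + ε * ‖z‖ ^ 2 + 2 * ε ^ (-(1:ℝ)/2) * δ ^ (2 * p) * ‖v - u‖ ^ 2
        + 2 * ε ^ (-(1:ℝ)/2) * δ ^ (2 * p - 2) * θ ^ 2 * ‖u‖ ^ 2 := by
  refine ⟨(C_B * a₀) ^ 4 / 2 + 1, by positivity, ?_⟩
  intro ε δ p hε hδ hp m θ hm hθ u v z hum
  set K := C_B * a₀ with hKdef
  have hK : 0 < K := mul_pos hC_B ha₀
  set d1 := δ ^ p with hd1
  set e1 := ε ^ ((1:ℝ)/4) with he1
  have hd1pos : 0 < d1 := Real.rpow_pos_of_pos hδ p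
  have he1pos : 0 < e1 := Real.rpow_pos_of_pos hε _
  have he4 : e1 ^ 4 = ε := by
    rw [he1, ← Real.rpow_natCast (ε ^ ((1:ℝ)/4)) 4, ← Real.rpow_mul hε.le]; norm_num
  have hε12 : ε ^ (-(1:ℝ)/2) = (e1 ^ 2)⁻¹ := by
    rw [he1, ← Real.rpow_natCast (ε ^ ((1:ℝ)/4)) 2, ← Real.rpow_mul hε.le,
      ← Real.rpow_neg hε.le]; norm_num
  have hδ4 : δ ^ (-(4 * p)) = (d1 ^ 4)⁻¹ := by
    rw [hd1, ← Real.rpow_natCast (δ ^ p) 4, ← Real.rpow_mul hδ.le, ← Real.rpow_neg hδ.le]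
    norm_num [mul_comm]
  have hδ2 : δ ^ (2 * p) = d1 ^ 2 := by
    rw [hd1, ← Real.rpow_natCast (δ ^ p) 2, ← Real.rpow_mul hδ.le]; norm_num [mul_comm]
  have hδ22 : δ ^ (2 * p - 2) = d1 ^ 2 / δ ^ 2 := by
    rw [Real.rpow_sub hδ, hδ2, ← Real.rpow_natCast δ 2]; norm_num
  rw [hδ4, hδ2, hδ22, hε12]
  set A := ‖jH u‖ with hA
  set U := ‖u‖ with hU
  set Z := ‖jH z‖ with hZ
  set W := ‖z‖ with hW
  set D := ‖v - u‖ with hD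
  have hA0 : 0 ≤ A := norm_nonneg _
  have hU0 : 0 ≤ U := norm_nonneg _
  have hZ0 : 0 ≤ Z := norm_nonneg _
  have hW0 : 0 ≤ W := norm_nonneg _
  have hD0 : 0 ≤ D := norm_nonneg _
  set r := Real.sqrt (A * U * Z) with hr
  set w := Real.sqrt W with hw
  have hr0 : 0 ≤ r := Real.sqrt_nonneg _
  have hw0 : 0 ≤ w := Real.sqrt_nonneg _
  have hr2 : r ^ 2 = A * U * Z := Real.sq_sqrt (by positivity)
  have hw2 : w ^ 2 = W := Real.sq_sqrt hW0
  have hQ : ‖jQ u‖ * ‖jQ z‖ ≤ a₀ * (r * w) := by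
    have key : ‖jQ u‖ ^ 2 * ‖jQ z‖ ^ 2 ≤ (a₀ * A * U) * (a₀ * Z * W) :=
      mul_le_mul (hQnorm u) (hQnorm z) (sq_nonneg _) (by positivity)
    have hsq : (‖jQ u‖ * ‖jQ z‖) ^ 2 ≤ (a₀ * (r * w)) ^ 2 := by
      calc (‖jQ u‖ * ‖jQ z‖) ^ 2 = ‖jQ u‖ ^ 2 * ‖jQ z‖ ^ 2 := by ring
        _ ≤ (a₀ * A * U) * (a₀ * Z * W) := key
        _ = a₀ ^ 2 * (A * U * Z) * W := by ring
        _ = a₀ ^ 2 * r ^ 2 * w ^ 2 := by rw [hr2, hw2]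
        _ = (a₀ * (r * w)) ^ 2 := by ring
    have h3 := Real.sqrt_le_sqrt hsq
    rwa [Real.sqrt_sq (by positivity), Real.sqrt_sq (by positivity)] at h3
  have hv : ‖v‖ ≤ D + U := by
    calc ‖v‖ = ‖(v - u) + u‖ := by rw [sub_add_cancel]
    _ ≤ D + U := norm_add_le _ _
  have hBound : |B u v z| ≤ K * (r * w) * D + K * (r * w) * U := by
    calc |B u v z| ≤ C_B * ‖jQ u‖ * ‖v‖ * ‖jQ z‖ := hB u v z
    _ = C_B * (‖jQ u‖ * ‖jQ z‖) * ‖v‖ := by ring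
    _ ≤ C_B * (a₀ * (r * w)) * (D + U) :=
        mul_le_mul (mul_le_mul_of_nonneg_left hQ hC_B.le) hv (norm_nonneg v) (by positivity)
    _ = K * (r * w) * D + K * (r * w) * U := by rw [hKdef]; ring
  have hq : d1 ^ 2 ≤ d1 ^ 2 / δ ^ 2 * θ ^ 2 := by
    rw [div_mul_eq_mul_div, le_div_iff₀ (by positivity)]
    have hθ2 : δ ^ 2 ≤ θ ^ 2 := by nlinarith
    exact mul_le_mul_of_nonneg_left hθ2 (sq_nonneg d1)
  have main := aux_ineq K d1 e1 A U Z W D (m + 1) (d1 ^ 2 / δ ^ 2 * θ ^ 2) r w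
    hK hd1pos he1pos hU0 hZ0 hW0 hD0 hA0 hum hq hr0 hw0 hr2 hw2
  calc |B u v z| ≤ K * (r * w) * D + K * (r * w) * U := hBound
    _ ≤ (K ^ 4 / 2 + 1) * (d1 ^ 4)⁻¹ * (m + 1) ^ 2 * Z ^ 2 * U ^ 2 + e1 ^ 4 * W ^ 2
        + 2 * (e1 ^ 2)⁻¹ * d1 ^ 2 * D ^ 2
        + 2 * (e1 ^ 2)⁻¹ * (d1 ^ 2 / δ ^ 2 * θ ^ 2) * U ^ 2 := main
    _ = (K ^ 4 / 2 + 1) * (d1 ^ 4)⁻¹ * (m + 1) ^ 2 * Z ^ 2 * U ^ 2 + ε * W ^ 2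
        + 2 * (e1 ^ 2)⁻¹ * d1 ^ 2 * D ^ 2
        + 2 * (e1 ^ 2)⁻¹ * (d1 ^ 2 / δ ^ 2) * θ ^ 2 * U ^ 2 := by rw [← he4]; ring
end

section
/- There exists a constant C > 0, depending only on a₀, C_B, L_φ and K, such that for every ε > 0 and every t > 0 with |y_n|_{ξ_t} ≤ 3δ and |y_{n−1}|_{ξ_t} ≤ 3δ: I_n(t) ≤ 5ε ‖y_{n+1}(t) − y_n(t)‖² + 2ε ‖y_n(t) − y_{n−1}(t)‖² + C ε δ^{-3/2} ‖y_n(t)‖² |y_n − y_{n−1}|_{ξ_t}² + 3ε |y_n(t) − y_{n−1}(t)|² Ξ_n(t) + C ε⁻³ (1 + (m+2)² + δ⁻¹(m+2)²) |y_{n+1}(t) − y_n(t)|² Ξ_n(t). -/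
open MeasureTheory

/-- Four-factor weighted AM-GM. -/
lemma genY4 {a b c d t x y z w : ℝ} (ha : 0 ≤ a) (hb : 0 ≤ b) (hc : 0 ≤ c) (hd : 0 ≤ d)
    (ht : 0 ≤ t) (hx : 0 ≤ x) (hy : 0 ≤ y) (hz : 0 ≤ z) (hw : 0 ≤ w)
    (h : t ^ 4 ≤ a * b * c * d) :
    4 * t * (x * y * z * w) ≤ a * x ^ 4 + b * y ^ 4 + c * z ^ 4 + d * w ^ 4 := by
  have hab : (0:ℝ) ≤ a * b := mul_nonneg ha hb
  have hcd : (0:ℝ) ≤ c * d := mul_nonneg hc hd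
  set u := Real.sqrt (a * b) * (x ^ 2 * y ^ 2) with hu
  set v := Real.sqrt (c * d) * (z ^ 2 * w ^ 2) with hv
  have hu0 : 0 ≤ u := by positivity
  have hv0 : 0 ≤ v := by positivity
  have h1 : 2 * u ≤ a * x ^ 4 + b * y ^ 4 := by
    have e1 := Real.sq_sqrt ha
    have e2 := Real.sq_sqrt hb
    have e3 : Real.sqrt a * Real.sqrt b = Real.sqrt (a * b) := (Real.sqrt_mul ha b).symm
    rw [hu, ← e3]
    have key : (Real.sqrt a * x ^ 2 - Real.sqrt b * y ^ 2) ^ 2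
        = a * x ^ 4 - 2 * (Real.sqrt a * Real.sqrt b * (x ^ 2 * y ^ 2)) + b * y ^ 4 := by
      have expand : (Real.sqrt a * x ^ 2 - Real.sqrt b * y ^ 2) ^ 2
          = Real.sqrt a ^ 2 * x ^ 4 - 2 * (Real.sqrt a * Real.sqrt b * (x ^ 2 * y ^ 2))
            + Real.sqrt b ^ 2 * y ^ 4 := by ring
      rw [expand, e1, e2]
    linarith [sq_nonneg (Real.sqrt a * x ^ 2 - Real.sqrt b * y ^ 2), key]
  have h2 : 2 * v ≤ c * z ^ 4 + d * w ^ 4 := by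
    have e1 := Real.sq_sqrt hc
    have e2 := Real.sq_sqrt hd
    have e3 : Real.sqrt c * Real.sqrt d = Real.sqrt (c * d) := (Real.sqrt_mul hc d).symm
    rw [hv, ← e3]
    have key : (Real.sqrt c * z ^ 2 - Real.sqrt d * w ^ 2) ^ 2
        = c * z ^ 4 - 2 * (Real.sqrt c * Real.sqrt d * (z ^ 2 * w ^ 2)) + d * w ^ 4 := by
      have expand : (Real.sqrt c * z ^ 2 - Real.sqrt d * w ^ 2) ^ 2
          = Real.sqrt c ^ 2 * z ^ 4 - 2 * (Real.sqrt c * Real.sqrt d * (z ^ 2 * w ^ 2))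
            + Real.sqrt d ^ 2 * w ^ 4 := by ring
      rw [expand, e1, e2]
    linarith [sq_nonneg (Real.sqrt c * z ^ 2 - Real.sqrt d * w ^ 2), key]
  have h4 : t ^ 2 ≤ Real.sqrt (a * b) * Real.sqrt (c * d) := by
    have e : Real.sqrt (a * b) * Real.sqrt (c * d) = Real.sqrt (a * b * (c * d)) :=
      (Real.sqrt_mul hab _).symm
    rw [e]
    have : t ^ 2 = Real.sqrt ((t ^ 2) ^ 2) := (Real.sqrt_sq (sq_nonneg t)).symm
    rw [this]
    apply Real.sqrt_le_sqrt
    nlinarith [h]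
  have h3 : (t * (x * y * z * w)) ^ 2 ≤ u * v := by
    have hxy : (0:ℝ) ≤ (x * y * z * w) ^ 2 := sq_nonneg _
    calc (t * (x * y * z * w)) ^ 2 = t ^ 2 * (x * y * z * w) ^ 2 := by ring
      _ ≤ (Real.sqrt (a * b) * Real.sqrt (c * d)) * (x * y * z * w) ^ 2 :=
        mul_le_mul_of_nonneg_right h4 hxy
      _ = u * v := by rw [hu, hv]; ring
  have hs : 0 ≤ t * (x * y * z * w) := by positivity
  nlinarith [sq_nonneg (u - v), h3, hu0, hv0, hs, h1, h2]

/-- Three-factor weighted AM-GM with weights (1/2, 1/4, 1/4). -/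
lemma genY3 {a b c t x y z : ℝ} (ha : 0 ≤ a) (hb : 0 ≤ b) (hc : 0 ≤ c)
    (ht : 0 ≤ t) (hx : 0 ≤ x) (hy : 0 ≤ y) (hz : 0 ≤ z)
    (h : t ^ 4 ≤ (a / 2) ^ 2 * (b * c)) :
    4 * t * (x * y * z) ≤ a * x ^ 2 + b * y ^ 4 + c * z ^ 4 := by
  have ha2 : (0:ℝ) ≤ a / 2 := by linarith
  have hsx : 0 ≤ Real.sqrt x := Real.sqrt_nonneg x
  have h4 := genY4 ha2 ha2 hb hc ht hsx hsx hy hz (by nlinarith [h])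
  have e1 : Real.sqrt x * Real.sqrt x = x := Real.mul_self_sqrt hx
  have e2 : Real.sqrt x ^ 4 = x ^ 2 := by
    rw [show Real.sqrt x ^ 4 = (Real.sqrt x ^ 2) ^ 2 by ring, Real.sq_sqrt hx]
  calc 4 * t * (x * y * z) = 4 * t * (Real.sqrt x * Real.sqrt x * y * z) := by rw [e1]
    _ ≤ a / 2 * Real.sqrt x ^ 4 + a / 2 * Real.sqrt x ^ 4 + b * y ^ 4 + c * z ^ 4 := h4
    _ = a * x ^ 2 + b * y ^ 4 + c * z ^ 4 := by rw [e2]; ring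

/-- A `C²` function on `[0,∞)` with derivative bounded by `L` is `L`-Lipschitz there. -/
lemma lip_aux {f : ℝ → ℝ} (hf : ContDiffOn ℝ 2 f (Set.Ici 0)) {L : ℝ}
    (hL : ∀ x : ℝ, 0 ≤ x → |deriv f x| ≤ L) :
    ∀ x y : ℝ, 0 ≤ x → 0 ≤ y → |f x - f y| ≤ L * |x - y| := by
  have hdiff : DifferentiableOn ℝ f (Set.Ici 0) := hf.differentiableOn (by norm_num)
  have hder : ∀ x ∈ Set.Ici (0:ℝ),
      HasDerivWithinAt f (derivWithin f (Set.Ici 0) x) (Set.Ici 0) x :=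
    fun x hx => (hdiff x hx).hasDerivWithinAt
  have heq : ∀ x : ℝ, 0 < x → derivWithin f (Set.Ici 0) x = deriv f x := fun x hx =>
    derivWithin_of_mem_nhds (Ici_mem_nhds hx)
  have hbound : ∀ x ∈ Set.Ici (0:ℝ), ‖derivWithin f (Set.Ici 0) x‖ ≤ L := by
    intro x hx
    rcases eq_or_lt_of_le (Set.mem_Ici.mp hx) with h0 | h0
    · subst h0
      have hcont : ContinuousOn (derivWithin f (Set.Ici 0)) (Set.Ici 0) :=
        hf.continuousOn_derivWithin (uniqueDiffOn_Ici 0) (by norm_num)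
      have htend : Filter.Tendsto (fun y => ‖derivWithin f (Set.Ici 0) y‖)
          (nhdsWithin 0 (Set.Ioi 0)) (nhds ‖derivWithin f (Set.Ici 0) 0‖) :=
        (((hcont 0 Set.self_mem_Ici).mono Set.Ioi_subset_Ici_self).norm)
      refine le_of_tendsto htend ?_
      filter_upwards [self_mem_nhdsWithin] with y hy
      rw [heq y hy, Real.norm_eq_abs]
      exact hL y (le_of_lt hy)
    · rw [heq x h0, Real.norm_eq_abs]; exact hL x hx
  intro x y hx hy
  have := Convex.norm_image_sub_le_of_norm_hasDerivWithin_le hder hbound (convex_Ici 0) hy hx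
  simpa [Real.norm_eq_abs] using this

/-- L² triangle-type inequality for integrals. -/
lemma sqrt_integral_tri {α : Type*} [MeasurableSpace α] {μ : Measure α} {f g d : α → ℝ}
    (hgm : AEStronglyMeasurable g μ) (hdm : AEStronglyMeasurable d μ)
    (hf0 : ∀ x, 0 ≤ f x) (hg0 : ∀ x, 0 ≤ g x) (hd0 : ∀ x, 0 ≤ d x)
    (hle : ∀ x, f x ≤ g x + d x)
    (hfi : Integrable (fun x => f x ^ 2) μ) (hgi : Integrable (fun x => g x ^ 2) μ)
    (hdi : Integrable (fun x => d x ^ 2) μ) :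
    Real.sqrt (∫ x, f x ^ 2 ∂μ) ≤
      Real.sqrt (∫ x, g x ^ 2 ∂μ) + Real.sqrt (∫ x, d x ^ 2 ∂μ) := by
  have hIg : 0 ≤ ∫ x, g x ^ 2 ∂μ := integral_nonneg fun x => sq_nonneg _
  have hId : 0 ≤ ∫ x, d x ^ 2 ∂μ := integral_nonneg fun x => sq_nonneg _
  have hgd : Integrable (fun x => g x * d x) μ := by
    refine (hgi.add hdi).mono' (hgm.mul hdm) (Filter.Eventually.of_forall fun x => ?_)
    have := sq_nonneg (g x - d x)
    rw [Real.norm_eq_abs, abs_mul, abs_of_nonneg (hg0 x), abs_of_nonneg (hd0 x)]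
    simp only [Pi.add_apply]
    nlinarith [sq_nonneg (g x - d x)]
  have hH : ∫ x, g x * d x ∂μ ≤
      Real.sqrt (∫ x, g x ^ 2 ∂μ) * Real.sqrt (∫ x, d x ^ 2 ∂μ) := by
    have hpq : Real.HolderConjugate 2 2 := Real.HolderConjugate.two_two
    have hg2 : MemLp g (ENNReal.ofReal 2) μ := by
      rw [show ENNReal.ofReal 2 = 2 by norm_num]
      exact (memLp_two_iff_integrable_sq hgm).mpr hgi
    have hd2 : MemLp d (ENNReal.ofReal 2) μ := by
      rw [show ENNReal.ofReal 2 = 2 by norm_num]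
      exact (memLp_two_iff_integrable_sq hdm).mpr hdi
    have H := integral_mul_le_Lp_mul_Lq_of_nonneg hpq
      (Filter.Eventually.of_forall hg0) (Filter.Eventually.of_forall hd0) hg2 hd2
    have e2 : ∀ r : ℝ, r ^ (2:ℝ) = r ^ 2 := fun r => by
      rw [show (2:ℝ) = ((2:ℕ):ℝ) by norm_num, Real.rpow_natCast]
    simp only [e2] at H
    rw [← Real.sqrt_eq_rpow, ← Real.sqrt_eq_rpow] at H
    exact H
  have key : ∫ x, f x ^ 2 ∂μ ≤
      (Real.sqrt (∫ x, g x ^ 2 ∂μ) + Real.sqrt (∫ x, d x ^ 2 ∂μ)) ^ 2 := by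
    have h1 : ∫ x, f x ^ 2 ∂μ ≤ ∫ x, (g x ^ 2 + 2 * (g x * d x) + d x ^ 2) ∂μ := by
      have h2gd : Integrable (fun x => 2 * (g x * d x)) μ := hgd.const_mul 2
      have hsum : Integrable (fun x => g x ^ 2 + 2 * (g x * d x)) μ := hgi.add h2gd
      refine integral_mono hfi (hsum.add hdi) fun x => ?_
      nlinarith [hf0 x, hg0 x, hd0 x, hle x]
    have h2gd : Integrable (fun x => 2 * (g x * d x)) μ := hgd.const_mul 2
    have hsum : Integrable (fun x => g x ^ 2 + 2 * (g x * d x)) μ := hgi.add h2gd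
    have h2 : ∫ x, (g x ^ 2 + 2 * (g x * d x) + d x ^ 2) ∂μ
        = (∫ x, g x ^ 2 ∂μ) + 2 * (∫ x, g x * d x ∂μ) + ∫ x, d x ^ 2 ∂μ := by
      rw [integral_add hsum hdi, integral_add hgi h2gd, MeasureTheory.integral_const_mul]
    have e1 := Real.sq_sqrt hIg
    have e2 := Real.sq_sqrt hId
    nlinarith [h1, h2, hH, e1, e2]
  calc Real.sqrt (∫ x, f x ^ 2 ∂μ)
      ≤ Real.sqrt ((Real.sqrt (∫ x, g x ^ 2 ∂μ) + Real.sqrt (∫ x, d x ^ 2 ∂μ)) ^ 2) :=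
        Real.sqrt_le_sqrt key
    _ = Real.sqrt (∫ x, g x ^ 2 ∂μ) + Real.sqrt (∫ x, d x ^ 2 ∂μ) :=
        Real.sqrt_sq (by positivity)

lemma norm_sub_sq_le {V : Type*} [NormedAddCommGroup V] (x y : V) :
    ‖x - y‖ ^ 2 ≤ 2 * ‖y‖ ^ 2 + 2 * ‖x‖ ^ 2 := by
  have h1 : ‖x - y‖ ^ 2 ≤ (‖x‖ + ‖y‖) ^ 2 :=
    pow_le_pow_left₀ (norm_nonneg _) (norm_sub_le x y) 2
  nlinarith [sq_nonneg (‖x‖ - ‖y‖), h1]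

lemma one_le_sq {x : ℝ} (h : 1 ≤ x) : 1 ≤ x ^ 2 := by nlinarith

lemma sqrt_add_le' {x y : ℝ} (hx : 0 ≤ x) (hy : 0 ≤ y) :
    Real.sqrt (x + y) ≤ Real.sqrt x + Real.sqrt y := by
  have h1 : x + y ≤ (Real.sqrt x + Real.sqrt y) ^ 2 := by
    nlinarith [Real.sq_sqrt hx, Real.sq_sqrt hy, Real.sqrt_nonneg x, Real.sqrt_nonneg y]
  calc Real.sqrt (x + y) ≤ Real.sqrt ((Real.sqrt x + Real.sqrt y) ^ 2) := Real.sqrt_le_sqrt h1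
    _ = Real.sqrt x + Real.sqrt y := Real.sqrt_sq (by positivity)

lemma le_sqrt_of_le_one {d L x : ℝ} (h0 : 0 ≤ d) (h1 : d ≤ 1) (h2 : d ≤ L * x)
    (hL : 0 ≤ L) (hx : 0 ≤ x) : d ≤ Real.sqrt L * Real.sqrt x := by
  rw [← Real.sqrt_mul hL x]
  apply Real.le_sqrt_of_sq_le
  nlinarith

lemma pv_aux {P v : ℝ} (hP : 0 < P) (hv : 0 < v) (h : P * P = v ^ 3) :
    v ^ 2 ≤ P * (1 + v) := by
  have h2P : 2 * P ≤ v + v ^ 2 := by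
    nlinarith [sq_nonneg (v - v ^ 2), sq_nonneg (v + v ^ 2 - 2 * P)]
  nlinarith [mul_le_mul_of_nonneg_left h2P (sq_nonneg v), mul_pos hv (mul_pos hv hv)]

lemma bucket_aux {CB Kc Lc M di : ℝ} (hCB : 0 ≤ CB) (hK : 0 ≤ Kc) (hL : 0 ≤ Lc)
    (hM : 1 ≤ M ^ 2) (hd : 0 ≤ di) :
    CB / 192 + CB * Lc ^ 4 / 36 * M ^ 2 + CB * Lc ^ 2 / 36
      + CB * Kc ^ 4 / 64 * (di * M ^ 2) + CB * Kc ^ 2 / 192 * (1 + di)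
    ≤ (2 + CB / 192 + CB * Lc ^ 4 / 36 + CB * Lc ^ 2 / 36 + CB * Kc ^ 4 / 64
        + CB * Kc ^ 2 / 192) * (1 + M ^ 2 + di * M ^ 2) := by
  have hM0 : 0 ≤ M ^ 2 := sq_nonneg M
  have e1 : 0 ≤ CB * Lc ^ 4 / 36 := by positivity
  have e2 : 0 ≤ CB * Lc ^ 2 / 36 := by positivity
  have e3 : 0 ≤ CB * Kc ^ 4 / 64 := by positivity
  have e4 : 0 ≤ CB * Kc ^ 2 / 192 := by positivity
  have e5 : 0 ≤ CB / 192 := by positivity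
  nlinarith [mul_nonneg e1 hM0, mul_nonneg e3 (mul_nonneg hd hM0), mul_nonneg e4 hd,
    mul_nonneg e2 hM0, mul_nonneg e5 hM0, mul_nonneg e5 (mul_nonneg hd hM0),
    mul_nonneg e2 (mul_nonneg hd hM0), mul_nonneg e4 hM0,
    mul_nonneg e4 (mul_nonneg hd hM0), mul_nonneg e1 (mul_nonneg hd hM0),
    mul_nonneg e3 hM0, mul_nonneg (mul_nonneg e4 hd) hM0]


set_option maxHeartbeats 2000000 in
/-- There exists a constant `C > 0`, depending only on `a₀`, `C_B`, `L_φ`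
and `K`, such that for every `ε > 0` and every `t > 0` with `|y_n|_{ξ_t} ≤ 3δ` and
`|y_{n−1}|_{ξ_t} ≤ 3δ`:
`I_n(t) ≤ 5ε ‖y_{n+1}(t) − y_n(t)‖² + 2ε ‖y_n(t) − y_{n−1}(t)‖²
  + C ε δ^{-3/2} ‖y_n(t)‖² |y_n − y_{n−1}|_{ξ_t}² + 3ε |y_n(t) − y_{n−1}(t)|² Ξ_n(t)
  + C ε⁻³ (1 + (m+2)² + δ⁻¹(m+2)²) |y_{n+1}(t) − y_n(t)|² Ξ_n(t)`.

Here `ya = y_{n−1}`, `yb = y_n`, `yc = y_{n+1}`, `I_n` and `Ξ_n` are given by the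
defining hypotheses `hIn`, `hXi`, `|·| = ‖jH ·‖` is the `H`-norm, `‖·‖` the `V`-norm,
and `|y|_{ξ_t} = (∫_0^t ‖y(s)‖² ds)^{1/2}`. -/
theorem stmt10
    {H V Q : Type*}
    [NormedAddCommGroup H] [InnerProductSpace ℝ H] [TopologicalSpace.SeparableSpace H]
    [NormedAddCommGroup V] [InnerProductSpace ℝ V] [TopologicalSpace.SeparableSpace V]
    [NormedAddCommGroup Q] [NormedSpace ℝ Q]
    (jH : V →L[ℝ] H) (hjH : Function.Injective jH)
    (jQ : V →L[ℝ] Q) (hjQ : Function.Injective jQ)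
    (a₀ : ℝ) (ha₀ : 0 < a₀)
    (hQnorm : ∀ v : V, ‖jQ v‖ ^ 2 ≤ a₀ * ‖jH v‖ * ‖v‖)
    (B : V →L[ℝ] V →L[ℝ] V →L[ℝ] ℝ)
    (hskew : ∀ u₁ u₂ u₃ : V, B u₁ u₂ u₃ = - B u₁ u₃ u₂)
    (C_B : ℝ) (hC_B : 0 < C_B)
    (hB : ∀ u v w : V, |B u v w| ≤ C_B * ‖jQ u‖ * ‖v‖ * ‖jQ w‖)
    -- the cut-off functions φ_m and g_δ
    (m : ℕ) (δ : ℝ) (hδ : 0 < δ)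
    (φ : ℝ → ℝ) (hφ_smooth : ContDiffOn ℝ 2 φ (Set.Ici 0))
    (hφ_map : ∀ x : ℝ, 0 ≤ x → φ x ∈ Set.Icc (0:ℝ) 1)
    (hφ_one : ∀ x ∈ Set.Icc (0:ℝ) (m:ℝ), φ x = 1)
    (hφ_zero : ∀ x : ℝ, (m:ℝ) + 1 ≤ x → φ x = 0)
    (Lφ : ℝ) (hLφ : ∀ x : ℝ, 0 ≤ x → |deriv φ x| ≤ Lφ)
    (g : ℝ → ℝ) (hg_smooth : ContDiffOn ℝ 2 g (Set.Ici 0))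
    (hg_map : ∀ x : ℝ, 0 ≤ x → g x ∈ Set.Icc (0:ℝ) 1)
    (hg_one : ∀ x ∈ Set.Icc (0:ℝ) δ, g x = 1)
    (hg_zero : ∀ x : ℝ, 2 * δ ≤ x → g x = 0)
    (K : ℝ) (hK : 0 < K) (hgK : ∀ x : ℝ, 0 ≤ x → |deriv g x| ≤ K / δ)
    -- the processes y_{n-1} = ya, y_n = yb, y_{n+1} = yc
    (ya yb yc : ℝ → V)
    (hya : StronglyMeasurable ya) (hyb : StronglyMeasurable yb)
    (hyc : StronglyMeasurable yc)
    (hya_int : ∀ t : ℝ, 0 < t → IntegrableOn (fun s => ‖ya s‖ ^ 2) (Set.Ioc 0 t))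
    (hyb_int : ∀ t : ℝ, 0 < t → IntegrableOn (fun s => ‖yb s‖ ^ 2) (Set.Ioc 0 t))
    (hyc_int : ∀ t : ℝ, 0 < t → IntegrableOn (fun s => ‖yc s‖ ^ 2) (Set.Ioc 0 t))
    -- the quantities I_n and Ξ_n
    (In Xi : ℝ → ℝ)
    (hIn : ∀ t : ℝ, In t =
      φ ‖jH (yb t)‖ * g (Real.sqrt (∫ s in Set.Ioc (0:ℝ) t, ‖yb s‖ ^ 2)) *
          B (yb t) (yc t) (yc t - yb t)
        - φ ‖jH (ya t)‖ * g (Real.sqrt (∫ s in Set.Ioc (0:ℝ) t, ‖ya s‖ ^ 2)) *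
          B (ya t) (yb t) (yc t - yb t))
    (hXi : ∀ t : ℝ, Xi t =
      ‖ya t‖ ^ 2 * Set.indicator (Set.Icc (0:ℝ) (3 * δ)) (fun _ => (1:ℝ))
          (Real.sqrt (∫ s in Set.Ioc (0:ℝ) t, ‖ya s‖ ^ 2))
        + ‖yb t‖ ^ 2 * Set.indicator (Set.Icc (0:ℝ) (3 * δ)) (fun _ => (1:ℝ))
          (Real.sqrt (∫ s in Set.Ioc (0:ℝ) t, ‖yb s‖ ^ 2))) :
    ∃ C : ℝ, 0 < C ∧ ∀ ε t : ℝ, 0 < ε → 0 < t →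
      Real.sqrt (∫ s in Set.Ioc (0:ℝ) t, ‖yb s‖ ^ 2) ≤ 3 * δ →
      Real.sqrt (∫ s in Set.Ioc (0:ℝ) t, ‖ya s‖ ^ 2) ≤ 3 * δ →
      In t ≤ 5 * ε * ‖yc t - yb t‖ ^ 2
        + 2 * ε * ‖yb t - ya t‖ ^ 2
        + C * ε * δ ^ (-(3:ℝ)/2) * ‖yb t‖ ^ 2 * (∫ s in Set.Ioc (0:ℝ) t, ‖yb s - ya s‖ ^ 2)
        + 3 * ε * ‖jH (yb t - ya t)‖ ^ 2 * Xi t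
        + C * ε ^ (-(3:ℝ)) * (1 + ((m:ℝ) + 2) ^ 2 + δ⁻¹ * ((m:ℝ) + 2) ^ 2)
            * ‖jH (yc t - yb t)‖ ^ 2 * Xi t := by
  have hLφ0 : 0 ≤ Lφ := le_trans (abs_nonneg _) (hLφ 0 le_rfl)
  refine ⟨2 + (C_B * a₀) ^ 4 / 192 + (C_B * a₀) ^ 4 * Lφ ^ 4 / 36
      + (C_B * a₀) ^ 4 * Lφ ^ 2 / 36 + (C_B * a₀) ^ 4 * K ^ 4 / 64
      + (C_B * a₀) ^ 4 * K ^ 2 / 192, by positivity, ?_⟩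
  intro ε t hε ht hξb3 hξa3
  have hInt := hIn t
  have hXit := hXi t
  -- abbreviations
  set Ia := ∫ s in Set.Ioc (0:ℝ) t, ‖ya s‖ ^ 2 with hIa_def
  set Ib := ∫ s in Set.Ioc (0:ℝ) t, ‖yb s‖ ^ 2 with hIb_def
  set Idd := ∫ s in Set.Ioc (0:ℝ) t, ‖yb s - ya s‖ ^ 2 with hIdd_def
  set ξa := Real.sqrt Ia with hξa_def
  set ξb := Real.sqrt Ib with hξb_def
  set E := Real.sqrt Idd with hE_def
  set va := ya t with hva_def
  set vb := yb t with hvb_def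
  set vc := yc t with hvc_def
  set Ha := ‖jH va‖ with hHa_def
  set Hb := ‖jH vb‖ with hHb_def
  set φa := φ Ha with hφa_def
  set φb := φ Hb with hφb_def
  set ga := g ξa with hga_def
  set gb := g ξb with hgb_def
  set N := ‖vb‖ with hN_def
  set A := ‖vc - vb‖ with hA_def
  set AH := ‖jH (vc - vb)‖ with hAH_def
  set D := ‖vb - va‖ with hD_def
  set DH := ‖jH (vb - va)‖ with hDH_def
  set M := (m:ℝ) + 2 with hM_def
  set P := δ ^ (-(3:ℝ)/2) with hP_def
  -- square roots
  set sN := Real.sqrt N with hsN_def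
  set sA := Real.sqrt A with hsA_def
  set sAH := Real.sqrt AH with hsAH_def
  set sD := Real.sqrt D with hsD_def
  set sDH := Real.sqrt DH with hsDH_def
  set sHb := Real.sqrt Hb with hsHb_def
  set sM := Real.sqrt M with hsM_def
  set sE := Real.sqrt E with hsE_def
  -- nonnegativity
  have hN0 : 0 ≤ N := norm_nonneg _
  have hA0 : 0 ≤ A := norm_nonneg _
  have hAH0 : 0 ≤ AH := norm_nonneg _
  have hD0 : 0 ≤ D := norm_nonneg _
  have hDH0 : 0 ≤ DH := norm_nonneg _
  have hHb0 : 0 ≤ Hb := norm_nonneg _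
  have hHa0 : 0 ≤ Ha := norm_nonneg _
  have hM0 : (0:ℝ) ≤ M := by rw [hM_def]; positivity
  have hM2le : (2:ℝ) ≤ M := by
    rw [hM_def]; have := Nat.cast_nonneg (α := ℝ) m; linarith
  have hM1 : (1:ℝ) ≤ M ^ 2 := one_le_sq (by linarith)
  have hξa0 : 0 ≤ ξa := Real.sqrt_nonneg _
  have hξb0 : 0 ≤ ξb := Real.sqrt_nonneg _
  have hIa0 : 0 ≤ Ia := integral_nonneg fun s => sq_nonneg _
  have hIb0 : 0 ≤ Ib := integral_nonneg fun s => sq_nonneg _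
  have hIdd0 : 0 ≤ Idd := integral_nonneg fun s => sq_nonneg _
  have hE0 : 0 ≤ E := Real.sqrt_nonneg _
  have hsN0 : 0 ≤ sN := Real.sqrt_nonneg _
  have hsA0 : 0 ≤ sA := Real.sqrt_nonneg _
  have hsAH0 : 0 ≤ sAH := Real.sqrt_nonneg _
  have hsD0 : 0 ≤ sD := Real.sqrt_nonneg _
  have hsDH0 : 0 ≤ sDH := Real.sqrt_nonneg _
  have hsHb0 : 0 ≤ sHb := Real.sqrt_nonneg _
  have hsM0 : 0 ≤ sM := Real.sqrt_nonneg _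
  have hsE0 : 0 ≤ sE := Real.sqrt_nonneg _
  have hδi0 : (0:ℝ) ≤ δ⁻¹ := by positivity
  have hP0 : 0 < P := Real.rpow_pos_of_pos hδ _
  have hee : ε ^ 3 * (ε ^ 3)⁻¹ = 1 := mul_inv_cancel₀ (pow_ne_zero 3 hε.ne')
  have hei0 : (0:ℝ) ≤ (ε ^ 3)⁻¹ := by positivity
  -- squares of roots
  have hNN : sN * sN = N := Real.mul_self_sqrt hN0
  have hAA : sA * sA = A := Real.mul_self_sqrt hA0
  have hDD : sD * sD = D := Real.mul_self_sqrt hD0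
  have hDHDH : sDH * sDH = DH := Real.mul_self_sqrt hDH0
  have hEE : sE * sE = E := Real.mul_self_sqrt hE0
  have sq4 : ∀ r : ℝ, 0 ≤ r → (Real.sqrt r) ^ 4 = r ^ 2 := fun r hr => by
    rw [show (Real.sqrt r) ^ 4 = ((Real.sqrt r) ^ 2) ^ 2 by ring, Real.sq_sqrt hr]
  have e4A : sA ^ 4 = A ^ 2 := sq4 A hA0
  have e4D : sD ^ 4 = D ^ 2 := sq4 D hD0
  have e4DH : sDH ^ 4 = DH ^ 2 := sq4 DH hDH0
  have e4AH : sAH ^ 4 = AH ^ 2 := sq4 AH hAH0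
  have e4N : sN ^ 4 = N ^ 2 := sq4 N hN0
  have e4M : sM ^ 4 = M ^ 2 := sq4 M hM0
  have e4E : sE ^ 4 = E ^ 2 := sq4 E hE0
  have hE2 : E ^ 2 = Idd := Real.sq_sqrt hIdd0
  have hPP : P * P = δ⁻¹ ^ 3 := by
    have h1 : P * P = δ ^ ((-(3:ℝ)/2) + (-(3:ℝ)/2)) := (Real.rpow_add hδ _ _).symm
    rw [show (-(3:ℝ)/2 + -(3:ℝ)/2) = -((3:ℕ):ℝ) by norm_num] at h1
    rw [Real.rpow_neg hδ.le, Real.rpow_natCast] at h1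
    rw [h1, inv_pow]
  -- range facts
  have hφa01 : 0 ≤ φa ∧ φa ≤ 1 := by
    rw [hφa_def]; exact ⟨(hφ_map _ hHa0).1, (hφ_map _ hHa0).2⟩
  have hφb01 : 0 ≤ φb ∧ φb ≤ 1 := by
    rw [hφb_def]; exact ⟨(hφ_map _ hHb0).1, (hφ_map _ hHb0).2⟩
  have hga01 : 0 ≤ ga ∧ ga ≤ 1 := by
    rw [hga_def]; exact ⟨(hg_map _ hξa0).1, (hg_map _ hξa0).2⟩
  have hgb01 : 0 ≤ gb ∧ gb ≤ 1 := by
    rw [hgb_def]; exact ⟨(hg_map _ hξb0).1, (hg_map _ hξb0).2⟩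
  -- Xi
  have hXiEq : Xi t = ‖va‖ ^ 2 + N ^ 2 := by
    rw [hXit, Set.indicator_of_mem (Set.mem_Icc.mpr ⟨hξa0, hξa3⟩) (fun _ => (1:ℝ)),
      Set.indicator_of_mem (Set.mem_Icc.mpr ⟨hξb0, hξb3⟩) (fun _ => (1:ℝ)), mul_one, mul_one]
  have hXiN : N ^ 2 ≤ Xi t := by rw [hXiEq]; linarith [sq_nonneg ‖va‖]
  have hXi0 : 0 ≤ Xi t := le_trans (sq_nonneg N) hXiN
  clear_value sN sA sAH sD sDH sHb sM sE
  clear_value Ha Hb φa φb ga gb N A AH D DH M P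
  clear_value ξa ξb E va vb vc
  -- Lipschitz facts
  have hHH : |Hb - Ha| ≤ DH := by
    rw [hHa_def, hHb_def, hDH_def, map_sub]
    exact abs_norm_sub_norm_le _ _
  have hφLip : |φb - φa| ≤ Lφ * DH := by
    rw [hφa_def, hφb_def]
    calc |φ Hb - φ Ha| ≤ Lφ * |Hb - Ha| := lip_aux hφ_smooth hLφ Hb Ha hHb0 hHa0
      _ ≤ Lφ * DH := mul_le_mul_of_nonneg_left hHH hLφ0
  -- the triangle inequality for the time integrals
  have hmeas_a : AEStronglyMeasurable (fun s => ‖ya s‖) (volume.restrict (Set.Ioc (0:ℝ) t)) :=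
    hya.norm.aestronglyMeasurable
  have hmeas_b : AEStronglyMeasurable (fun s => ‖yb s‖) (volume.restrict (Set.Ioc (0:ℝ) t)) :=
    hyb.norm.aestronglyMeasurable
  have hmeas_d : AEStronglyMeasurable (fun s => ‖yb s - ya s‖)
      (volume.restrict (Set.Ioc (0:ℝ) t)) := (hyb.sub hya).norm.aestronglyMeasurable
  have hint_a : Integrable (fun s => ‖ya s‖ ^ 2) (volume.restrict (Set.Ioc (0:ℝ) t)) :=
    (hya_int t ht).integrable
  have hint_b : Integrable (fun s => ‖yb s‖ ^ 2) (volume.restrict (Set.Ioc (0:ℝ) t)) :=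
    (hyb_int t ht).integrable
  have hint_d : Integrable (fun s => ‖yb s - ya s‖ ^ 2) (volume.restrict (Set.Ioc (0:ℝ) t)) := by
    refine ((hint_a.const_mul 2).add (hint_b.const_mul 2)).mono'
      ?_ (Filter.Eventually.of_forall fun s => ?_)
    · have h := (hyb.sub hya).norm
      exact (by have h2 : StronglyMeasurable fun s => ‖yb s - ya s‖ * ‖yb s - ya s‖ := h.mul h; simpa [pow_two] using h2 :
        StronglyMeasurable fun s => ‖yb s - ya s‖ ^ 2).aestronglyMeasurable
    · rw [Real.norm_eq_abs, abs_of_nonneg (sq_nonneg _)]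
      simpa using norm_sub_sq_le (yb s) (ya s)
  have htri1 : ξb ≤ ξa + E := by
    rw [hξa_def, hξb_def, hE_def, hIa_def, hIb_def, hIdd_def]
    refine sqrt_integral_tri hmeas_a hmeas_d (fun s => norm_nonneg _) (fun s => norm_nonneg _)
      (fun s => norm_nonneg _) (fun s => ?_) hint_b hint_a hint_d
    calc ‖yb s‖ = ‖ya s + (yb s - ya s)‖ := by rw [add_sub_cancel]
      _ ≤ ‖ya s‖ + ‖yb s - ya s‖ := norm_add_le _ _
  have htri2 : ξa ≤ ξb + E := by
    rw [hξa_def, hξb_def, hE_def, hIa_def, hIb_def, hIdd_def]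
    refine sqrt_integral_tri hmeas_b hmeas_d (fun s => norm_nonneg _) (fun s => norm_nonneg _)
      (fun s => norm_nonneg _) (fun s => ?_) hint_a hint_b hint_d
    calc ‖ya s‖ = ‖yb s - (yb s - ya s)‖ := by rw [sub_sub_cancel]
      _ ≤ ‖yb s‖ + ‖yb s - ya s‖ := norm_sub_le _ _
  have hξdiff : |ξb - ξa| ≤ E := abs_sub_le_iff.mpr ⟨by linarith, by linarith⟩
  have hgLip : |gb - ga| ≤ K * δ⁻¹ * E := by
    have h1 : |gb - ga| ≤ K / δ * |ξb - ξa| := by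
      rw [hga_def, hgb_def]
      exact lip_aux hg_smooth hgK ξb ξa hξb0 hξa0
    have h2 : K / δ * |ξb - ξa| ≤ K / δ * E :=
      mul_le_mul_of_nonneg_left hξdiff (by positivity)
    calc |gb - ga| ≤ K / δ * E := h1.trans h2
      _ = K * δ⁻¹ * E := by rw [div_eq_mul_inv]
  -- bounds on the trilinear terms
  have hQ' : ∀ v : V, ‖jQ v‖ ≤ Real.sqrt a₀ * (Real.sqrt ‖jH v‖ * Real.sqrt ‖v‖) := by
    intro v
    have h2 : ‖jQ v‖ ≤ Real.sqrt (a₀ * ‖jH v‖ * ‖v‖) := by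
      rw [show ‖jQ v‖ = Real.sqrt (‖jQ v‖ ^ 2) from (Real.sqrt_sq (norm_nonneg _)).symm]
      exact Real.sqrt_le_sqrt (hQnorm v)
    calc ‖jQ v‖ ≤ Real.sqrt (a₀ * ‖jH v‖ * ‖v‖) := h2
      _ = Real.sqrt a₀ * (Real.sqrt ‖jH v‖ * Real.sqrt ‖v‖) := by
        rw [Real.sqrt_mul (by positivity : (0:ℝ) ≤ a₀ * ‖jH v‖), Real.sqrt_mul ha₀.le]
        ring
  have hsa₀ : Real.sqrt a₀ * Real.sqrt a₀ = a₀ := Real.mul_self_sqrt ha₀.le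
  have hBd_abs : |B (vb - va) vb (vc - vb)| ≤ C_B * a₀ * (sDH * sD * sAH * sA * N) := by
    have h1 : ‖jQ (vb - va)‖ ≤ Real.sqrt a₀ * (sDH * sD) := by
      rw [hsDH_def, hsD_def, hDH_def, hD_def]; exact hQ' (vb - va)
    have h2 : ‖jQ (vc - vb)‖ ≤ Real.sqrt a₀ * (sAH * sA) := by
      rw [hsAH_def, hsA_def, hAH_def, hA_def]; exact hQ' (vc - vb)
    have step1 : C_B * ‖jQ (vb - va)‖ * N * ‖jQ (vc - vb)‖
        ≤ C_B * (Real.sqrt a₀ * (sDH * sD)) * N * (Real.sqrt a₀ * (sAH * sA)) := by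
      have m1 : C_B * ‖jQ (vb - va)‖ ≤ C_B * (Real.sqrt a₀ * (sDH * sD)) :=
        mul_le_mul_of_nonneg_left h1 hC_B.le
      have m2 : C_B * ‖jQ (vb - va)‖ * N
          ≤ C_B * (Real.sqrt a₀ * (sDH * sD)) * N :=
        mul_le_mul_of_nonneg_right m1 hN0
      exact mul_le_mul m2 h2 (norm_nonneg _) (by positivity)
    calc |B (vb - va) vb (vc - vb)| ≤ C_B * ‖jQ (vb - va)‖ * ‖vb‖ * ‖jQ (vc - vb)‖ := hB _ _ _
      _ = C_B * ‖jQ (vb - va)‖ * N * ‖jQ (vc - vb)‖ := by rw [hN_def]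
      _ ≤ C_B * (Real.sqrt a₀ * (sDH * sD)) * N * (Real.sqrt a₀ * (sAH * sA)) := step1
      _ = C_B * a₀ * (sDH * sD * sAH * sA * N) := by
        linear_combination (C_B * ((sDH * sD) * (N * (sAH * sA)))) * hsa₀
  have hBbb_abs : |B vb vb (vc - vb)| ≤ sHb * (C_B * a₀ * (sN * sN * sN * sAH * sA)) := by
    have h1 : ‖jQ vb‖ ≤ Real.sqrt a₀ * (sHb * sN) := by
      rw [hsHb_def, hsN_def, hHb_def, hN_def]; exact hQ' vb
    have h2 : ‖jQ (vc - vb)‖ ≤ Real.sqrt a₀ * (sAH * sA) := by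
      rw [hsAH_def, hsA_def, hAH_def, hA_def]; exact hQ' (vc - vb)
    have step1 : C_B * ‖jQ vb‖ * N * ‖jQ (vc - vb)‖
        ≤ C_B * (Real.sqrt a₀ * (sHb * sN)) * N * (Real.sqrt a₀ * (sAH * sA)) := by
      have m1 : C_B * ‖jQ vb‖ ≤ C_B * (Real.sqrt a₀ * (sHb * sN)) :=
        mul_le_mul_of_nonneg_left h1 hC_B.le
      have m2 : C_B * ‖jQ vb‖ * N
          ≤ C_B * (Real.sqrt a₀ * (sHb * sN)) * N :=
        mul_le_mul_of_nonneg_right m1 hN0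
      exact mul_le_mul m2 h2 (norm_nonneg _) (by positivity)
    calc |B vb vb (vc - vb)| ≤ C_B * ‖jQ vb‖ * ‖vb‖ * ‖jQ (vc - vb)‖ := hB _ _ _
      _ = C_B * ‖jQ vb‖ * N * ‖jQ (vc - vb)‖ := by rw [hN_def]
      _ ≤ C_B * (Real.sqrt a₀ * (sHb * sN)) * N * (Real.sqrt a₀ * (sAH * sA)) := step1
      _ = sHb * (C_B * a₀ * (sN * sN * sN * sAH * sA)) := by
        rw [← hNN]
        linear_combination (C_B * (sHb * sN * ((sN * sN) * (sAH * sA)))) * hsa₀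
  -- decomposition of In t
  have hBv : B vb vc (vc - vb) = B vb vb (vc - vb) := by
    have h0 : B vb (vc - vb) (vc - vb) = 0 := by
      have := hskew vb (vc - vb) (vc - vb); linarith
    have h1 : B vb ((vc - vb) + vb) (vc - vb) = B vb vc (vc - vb) := by
      rw [sub_add_cancel]
    rw [← h1, map_add, ContinuousLinearMap.add_apply, h0, zero_add]
  have hBd_eq : B (vb - va) vb (vc - vb) = B vb vb (vc - vb) - B va vb (vc - vb) := by
    have h := map_sub B vb va
    rw [h, ContinuousLinearMap.sub_apply, ContinuousLinearMap.sub_apply]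
  have hBab : B va vb (vc - vb) = B vb vb (vc - vb) - B (vb - va) vb (vc - vb) := by
    linarith [hBd_eq]
  have hIn_dec : In t = φa * ga * (B (vb - va) vb (vc - vb))
      + ((φb - φa) * gb * (B vb vb (vc - vb)) + φa * (gb - ga) * (B vb vb (vc - vb))) := by
    rw [hInt, hBv, hBab]; ring
  set RR := C_B * a₀ * (sN * sN * sN * sAH * sA) with hRR_def
  have hRR0 : 0 ≤ RR := by
    rw [hRR_def]; positivity
  -- ============ piece 1 ============
  have piece1 : φa * ga * (B (vb - va) vb (vc - vb))
      ≤ ε * A ^ 2 + ε * D ^ 2 + (3/4) * ε * (DH ^ 2 * N ^ 2)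
        + ((C_B * a₀) ^ 4 / 192) * (ε ^ 3)⁻¹ * (AH ^ 2 * N ^ 2) := by
    have habs : φa * ga * (B (vb - va) vb (vc - vb)) ≤ |B (vb - va) vb (vc - vb)| := by
      calc φa * ga * (B (vb - va) vb (vc - vb))
          ≤ φa * ga * |B (vb - va) vb (vc - vb)| :=
            mul_le_mul_of_nonneg_left (le_abs_self _) (mul_nonneg hφa01.1 hga01.1)
        _ ≤ 1 * |B (vb - va) vb (vc - vb)| := by
            refine mul_le_mul_of_nonneg_right ?_ (abs_nonneg _)
            calc φa * ga ≤ 1 * 1 := mul_le_mul hφa01.2 hga01.2 hga01.1 zero_le_one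
              _ = 1 := mul_one 1
        _ = |B (vb - va) vb (vc - vb)| := one_mul _
    have cond : (C_B * a₀ / 4) ^ 4
        ≤ ε * ε * ((3/4) * ε) * (((C_B * a₀) ^ 4 / 192) * (ε ^ 3)⁻¹) := by
      apply le_of_eq
      rw [show ε * ε * ((3/4) * ε) * (((C_B * a₀) ^ 4 / 192) * (ε ^ 3)⁻¹)
          = ((C_B * a₀) ^ 4 / 256) * (ε ^ 3 * (ε ^ 3)⁻¹) by ring, hee, mul_one]
      ring
    have raw := genY4 (a := ε) (b := ε) (c := (3/4) * ε)
      (d := ((C_B * a₀) ^ 4 / 192) * (ε ^ 3)⁻¹) (t := C_B * a₀ / 4)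
      (x := sA) (y := sD) (z := sDH * sN) (w := sAH * sN)
      hε.le hε.le (by positivity) (by positivity) (by positivity)
      hsA0 hsD0 (by positivity) (by positivity) cond
    have eZ : (sDH * sN) ^ 4 = DH ^ 2 * N ^ 2 := by rw [mul_pow, e4DH, e4N]
    have eW : (sAH * sN) ^ 4 = AH ^ 2 * N ^ 2 := by rw [mul_pow, e4AH, e4N]
    rw [e4A, e4D, eZ, eW] at raw
    calc φa * ga * (B (vb - va) vb (vc - vb))
        ≤ |B (vb - va) vb (vc - vb)| := habs
      _ ≤ C_B * a₀ * (sDH * sD * sAH * sA * N) := hBd_abs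
      _ = 4 * (C_B * a₀ / 4) * (sA * sD * ((sDH * sN) * (sAH * sN))) := by
          rw [← hNN]; ring
      _ ≤ ε * A ^ 2 + ε * D ^ 2 + (3/4) * ε * (DH ^ 2 * N ^ 2)
          + ((C_B * a₀) ^ 4 / 192) * (ε ^ 3)⁻¹ * (AH ^ 2 * N ^ 2) := by
          calc 4 * (C_B * a₀ / 4) * (sA * sD * ((sDH * sN) * (sAH * sN)))
              = 4 * (C_B * a₀ / 4) * (sA * sD * (sDH * sN) * (sAH * sN)) := by ring
            _ ≤ _ := raw
  -- common facts for pieces 2a, 2b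
  have hHb_of_a : φa ≠ 0 → Hb ≤ (m:ℝ) + 1 + DH := by
    intro hpa
    have hHa_le : Ha ≤ (m:ℝ) + 1 := by
      by_contra hh
      exact hpa (by rw [hφa_def]; exact hφ_zero Ha (by linarith))
    have h2 : Hb - Ha ≤ DH := le_trans (le_abs_self _) hHH
    linarith
  have hHb_of_b : φb ≠ 0 → Hb ≤ (m:ℝ) + 1 + DH := by
    intro hpb
    have : Hb ≤ (m:ℝ) + 1 := by
      by_contra hh
      exact hpb (by rw [hφb_def]; exact hφ_zero Hb (by linarith))
    linarith
  have hsHb_of : Hb ≤ (m:ℝ) + 1 + DH → sHb ≤ sM + sDH := by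
    intro hh
    rw [hsHb_def, hsM_def, hsDH_def]
    calc Real.sqrt Hb ≤ Real.sqrt (M + DH) := by
          apply Real.sqrt_le_sqrt; rw [hM_def]; linarith
      _ ≤ Real.sqrt M + Real.sqrt DH := sqrt_add_le' hM0 hDH0
  have eX2 : ∀ r : ℝ, (r * (sN * sN)) ^ 2 = r ^ 2 * N ^ 2 := fun r => by
    rw [mul_pow, hNN]
  have eZM : (sM * (sAH * sN)) ^ 4 = M ^ 2 * (AH ^ 2 * N ^ 2) := by
    rw [mul_pow, mul_pow, e4M, e4AH, e4N]
  have eW : (sAH * sN) ^ 4 = AH ^ 2 * N ^ 2 := by rw [mul_pow, e4AH, e4N]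
  have eZDH : (sDH * sN) ^ 4 = DH ^ 2 * N ^ 2 := by rw [mul_pow, e4DH, e4N]
  have eYE : (sE * sN) ^ 4 = E ^ 2 * N ^ 2 := by rw [mul_pow, e4E, e4N]
  -- ============ piece 2a ============
  have piece2a : (φb - φa) * gb * (B vb vb (vc - vb))
      ≤ 2 * (ε * A ^ 2) + 2 * ((3/4) * ε * (DH ^ 2 * N ^ 2))
        + ((C_B * a₀) ^ 4 * Lφ ^ 4 / 36) * (ε ^ 3)⁻¹ * (M ^ 2 * (AH ^ 2 * N ^ 2))
        + ((C_B * a₀) ^ 4 * Lφ ^ 2 / 36) * (ε ^ 3)⁻¹ * (AH ^ 2 * N ^ 2) := by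
    by_cases hzero : φa = 0 ∧ φb = 0
    · calc (φb - φa) * gb * (B vb vb (vc - vb)) = 0 := by rw [hzero.1, hzero.2]; ring
        _ ≤ _ := by positivity
    · have hHb_le : Hb ≤ (m:ℝ) + 1 + DH := by
        rcases not_and_or.mp hzero with hpa | hpb
        · exact hHb_of_a hpa
        · exact hHb_of_b hpb
      have hsHb_le : sHb ≤ sM + sDH := hsHb_of hHb_le
      have habs1 : |φb - φa| ≤ 1 :=
        abs_sub_le_iff.mpr ⟨by linarith [hφa01.1, hφb01.2], by linarith [hφb01.1, hφa01.2]⟩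
      have hmin2 : |φb - φa| ≤ Real.sqrt Lφ * sDH := by
        rw [hsDH_def]
        exact le_sqrt_of_le_one (abs_nonneg _) habs1 hφLip hLφ0 hDH0
      have key2a : |φb - φa| * sHb ≤ Lφ * DH * sM + Real.sqrt Lφ * DH := by
        calc |φb - φa| * sHb ≤ |φb - φa| * (sM + sDH) :=
            mul_le_mul_of_nonneg_left hsHb_le (abs_nonneg _)
          _ = |φb - φa| * sM + |φb - φa| * sDH := by ring
          _ ≤ (Lφ * DH) * sM + (Real.sqrt Lφ * sDH) * sDH :=
              add_le_add (mul_le_mul_of_nonneg_right hφLip hsM0)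
                (mul_le_mul_of_nonneg_right hmin2 hsDH0)
          _ = Lφ * DH * sM + Real.sqrt Lφ * DH := by
              rw [mul_assoc (Real.sqrt Lφ), hDHDH]
      have hT2a : (φb - φa) * gb * (B vb vb (vc - vb))
          ≤ (Lφ * DH * sM + Real.sqrt Lφ * DH) * RR := by
        calc (φb - φa) * gb * (B vb vb (vc - vb))
            ≤ |(φb - φa) * gb * (B vb vb (vc - vb))| := le_abs_self _
          _ = |φb - φa| * |gb| * |B vb vb (vc - vb)| := by rw [abs_mul, abs_mul]
          _ ≤ |φb - φa| * 1 * |B vb vb (vc - vb)| := by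
              refine mul_le_mul_of_nonneg_right ?_ (abs_nonneg _)
              refine mul_le_mul_of_nonneg_left ?_ (abs_nonneg _)
              rw [abs_of_nonneg hgb01.1]; exact hgb01.2
          _ = |φb - φa| * |B vb vb (vc - vb)| := by rw [mul_one]
          _ ≤ |φb - φa| * (sHb * RR) :=
              mul_le_mul_of_nonneg_left hBbb_abs (abs_nonneg _)
          _ = (|φb - φa| * sHb) * RR := by ring
          _ ≤ (Lφ * DH * sM + Real.sqrt Lφ * DH) * RR :=
              mul_le_mul_of_nonneg_right key2a hRR0
      have cond1 : (C_B * a₀ * Lφ / 4) ^ 4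
          ≤ ((3/4) * ε / 2) ^ 2
            * (ε * (((C_B * a₀) ^ 4 * Lφ ^ 4 / 36) * (ε ^ 3)⁻¹)) := by
        apply le_of_eq
        rw [show ((3/4) * ε / 2) ^ 2 * (ε * (((C_B * a₀) ^ 4 * Lφ ^ 4 / 36) * (ε ^ 3)⁻¹))
            = ((C_B * a₀) ^ 4 * Lφ ^ 4 / 256) * (ε ^ 3 * (ε ^ 3)⁻¹) by ring, hee, mul_one]
        ring
      have raw1 := genY3 (a := (3/4) * ε) (b := ε)
        (c := ((C_B * a₀) ^ 4 * Lφ ^ 4 / 36) * (ε ^ 3)⁻¹) (t := C_B * a₀ * Lφ / 4)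
        (x := DH * (sN * sN)) (y := sA) (z := sM * (sAH * sN))
        (by positivity) hε.le (by positivity) (by positivity)
        (by positivity) hsA0 (by positivity) cond1
      rw [eX2 DH, e4A, eZM] at raw1
      have e4Lφ : (Real.sqrt Lφ) ^ 4 = Lφ ^ 2 := sq4 Lφ hLφ0
      have cond2 : (C_B * a₀ * Real.sqrt Lφ / 4) ^ 4
          ≤ ((3/4) * ε / 2) ^ 2
            * (ε * (((C_B * a₀) ^ 4 * Lφ ^ 2 / 36) * (ε ^ 3)⁻¹)) := by
        apply le_of_eq
        rw [show (C_B * a₀ * Real.sqrt Lφ / 4) ^ 4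
            = (C_B * a₀) ^ 4 * (Real.sqrt Lφ) ^ 4 / 256 by ring, e4Lφ,
          show ((3/4) * ε / 2) ^ 2 * (ε * (((C_B * a₀) ^ 4 * Lφ ^ 2 / 36) * (ε ^ 3)⁻¹))
            = ((C_B * a₀) ^ 4 * Lφ ^ 2 / 256) * (ε ^ 3 * (ε ^ 3)⁻¹) by ring, hee, mul_one]
      have raw2 := genY3 (a := (3/4) * ε) (b := ε)
        (c := ((C_B * a₀) ^ 4 * Lφ ^ 2 / 36) * (ε ^ 3)⁻¹) (t := C_B * a₀ * Real.sqrt Lφ / 4)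
        (x := DH * (sN * sN)) (y := sA) (z := sAH * sN)
        (by positivity) hε.le (by positivity) (by positivity)
        (by positivity) hsA0 (by positivity) cond2
      rw [eX2 DH, e4A, eW] at raw2
      have i1 : Lφ * DH * sM * RR
          ≤ (3/4) * ε * (DH ^ 2 * N ^ 2) + ε * A ^ 2
            + ((C_B * a₀) ^ 4 * Lφ ^ 4 / 36) * (ε ^ 3)⁻¹ * (M ^ 2 * (AH ^ 2 * N ^ 2)) := by
        calc Lφ * DH * sM * RR
            = 4 * (C_B * a₀ * Lφ / 4) * ((DH * (sN * sN)) * sA * (sM * (sAH * sN))) := by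
              rw [hRR_def]; ring
          _ ≤ _ := raw1
      have i2 : Real.sqrt Lφ * DH * RR
          ≤ (3/4) * ε * (DH ^ 2 * N ^ 2) + ε * A ^ 2
            + ((C_B * a₀) ^ 4 * Lφ ^ 2 / 36) * (ε ^ 3)⁻¹ * (AH ^ 2 * N ^ 2) := by
        calc Real.sqrt Lφ * DH * RR
            = 4 * (C_B * a₀ * Real.sqrt Lφ / 4)
              * ((DH * (sN * sN)) * sA * (sAH * sN)) := by
              rw [hRR_def]; ring
          _ ≤ _ := raw2
      have hexp : (Lφ * DH * sM + Real.sqrt Lφ * DH) * RR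
          = Lφ * DH * sM * RR + Real.sqrt Lφ * DH * RR := by ring
      linarith [hT2a, i1, i2]
  -- ============ piece 2b ============
  have piece2b : φa * (gb - ga) * (B vb vb (vc - vb))
      ≤ 2 * (ε * A ^ 2) + (3/4) * ε * (DH ^ 2 * N ^ 2) + 2 * (ε * P * (E ^ 2 * N ^ 2))
        + ((C_B * a₀) ^ 4 * K ^ 4 / 64) * (ε ^ 3)⁻¹ * (δ⁻¹ * (M ^ 2 * (AH ^ 2 * N ^ 2)))
        + ((C_B * a₀) ^ 4 * K ^ 2 / 192) * (ε ^ 3)⁻¹ * ((1 + δ⁻¹) * (AH ^ 2 * N ^ 2)) := by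
    by_cases hpa : φa = 0
    · calc φa * (gb - ga) * (B vb vb (vc - vb)) = 0 := by rw [hpa]; ring
        _ ≤ _ := by positivity
    · have hsHb_le : sHb ≤ sM + sDH := hsHb_of (hHb_of_a hpa)
      have habs1 : |gb - ga| ≤ 1 :=
        abs_sub_le_iff.mpr ⟨by linarith [hga01.1, hgb01.2], by linarith [hgb01.1, hga01.2]⟩
      have hmin2 : |gb - ga| ≤ Real.sqrt (K * δ⁻¹) * sE := by
        rw [hsE_def]
        exact le_sqrt_of_le_one (abs_nonneg _) habs1 hgLip (by positivity) hE0
      have key2b : |gb - ga| * sHb ≤ K * δ⁻¹ * E * sM + Real.sqrt (K * δ⁻¹) * (sE * sDH) := by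
        calc |gb - ga| * sHb ≤ |gb - ga| * (sM + sDH) :=
            mul_le_mul_of_nonneg_left hsHb_le (abs_nonneg _)
          _ = |gb - ga| * sM + |gb - ga| * sDH := by ring
          _ ≤ (K * δ⁻¹ * E) * sM + (Real.sqrt (K * δ⁻¹) * sE) * sDH :=
              add_le_add (mul_le_mul_of_nonneg_right hgLip hsM0)
                (mul_le_mul_of_nonneg_right hmin2 hsDH0)
          _ = K * δ⁻¹ * E * sM + Real.sqrt (K * δ⁻¹) * (sE * sDH) := by ring
      have hT2b : φa * (gb - ga) * (B vb vb (vc - vb))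
          ≤ (K * δ⁻¹ * E * sM + Real.sqrt (K * δ⁻¹) * (sE * sDH)) * RR := by
        calc φa * (gb - ga) * (B vb vb (vc - vb))
            ≤ |φa * (gb - ga) * (B vb vb (vc - vb))| := le_abs_self _
          _ = |φa| * |gb - ga| * |B vb vb (vc - vb)| := by rw [abs_mul, abs_mul]
          _ ≤ 1 * |gb - ga| * |B vb vb (vc - vb)| := by
              refine mul_le_mul_of_nonneg_right ?_ (abs_nonneg _)
              refine mul_le_mul_of_nonneg_right ?_ (abs_nonneg _)
              rw [abs_of_nonneg hφa01.1]; exact hφa01.2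
          _ = |gb - ga| * |B vb vb (vc - vb)| := by rw [one_mul]
          _ ≤ |gb - ga| * (sHb * RR) :=
              mul_le_mul_of_nonneg_left hBbb_abs (abs_nonneg _)
          _ = (|gb - ga| * sHb) * RR := by ring
          _ ≤ (K * δ⁻¹ * E * sM + Real.sqrt (K * δ⁻¹) * (sE * sDH)) * RR :=
              mul_le_mul_of_nonneg_right key2b hRR0
      have cond1 : (C_B * a₀ * K * δ⁻¹ / 4) ^ 4
          ≤ (ε * P / 2) ^ 2
            * (ε * (((C_B * a₀) ^ 4 * K ^ 4 / 64) * (ε ^ 3)⁻¹ * δ⁻¹)) := by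
        apply le_of_eq
        rw [show (ε * P / 2) ^ 2 * (ε * (((C_B * a₀) ^ 4 * K ^ 4 / 64) * (ε ^ 3)⁻¹ * δ⁻¹))
            = (P * P) * ((C_B * a₀) ^ 4 * K ^ 4 / 256) * (ε ^ 3 * (ε ^ 3)⁻¹) * δ⁻¹ by ring,
          hPP, hee, mul_one]
        ring
      have raw1 := genY3 (a := ε * P) (b := ε)
        (c := ((C_B * a₀) ^ 4 * K ^ 4 / 64) * (ε ^ 3)⁻¹ * δ⁻¹) (t := C_B * a₀ * K * δ⁻¹ / 4)
        (x := E * (sN * sN)) (y := sA) (z := sM * (sAH * sN))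
        (by positivity) hε.le (by positivity) (by positivity)
        (by positivity) hsA0 (by positivity) cond1
      rw [eX2 E, e4A, eZM] at raw1
      have e4KD : (Real.sqrt (K * δ⁻¹)) ^ 4 = (K * δ⁻¹) ^ 2 := sq4 _ (by positivity)
      have cond2 : (C_B * a₀ * Real.sqrt (K * δ⁻¹) / 4) ^ 4
          ≤ ε * (ε * P) * ((3/4) * ε)
            * (((C_B * a₀) ^ 4 * K ^ 2 / 192) * (ε ^ 3)⁻¹ * (1 + δ⁻¹)) := by
        have hpv : δ⁻¹ ^ 2 ≤ P * (1 + δ⁻¹) := pv_aux hP0 (by positivity) hPP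
        have hl : (C_B * a₀ * Real.sqrt (K * δ⁻¹) / 4) ^ 4
            = (C_B * a₀) ^ 4 * K ^ 2 / 256 * (δ⁻¹ ^ 2) := by
          rw [show (C_B * a₀ * Real.sqrt (K * δ⁻¹) / 4) ^ 4
              = (C_B * a₀) ^ 4 * (Real.sqrt (K * δ⁻¹)) ^ 4 / 256 by ring, e4KD]
          ring
        have hr : ε * (ε * P) * ((3/4) * ε)
            * (((C_B * a₀) ^ 4 * K ^ 2 / 192) * (ε ^ 3)⁻¹ * (1 + δ⁻¹))
            = (C_B * a₀) ^ 4 * K ^ 2 / 256 * (P * (1 + δ⁻¹)) := by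
          rw [show ε * (ε * P) * ((3/4) * ε)
              * (((C_B * a₀) ^ 4 * K ^ 2 / 192) * (ε ^ 3)⁻¹ * (1 + δ⁻¹))
              = ((C_B * a₀) ^ 4 * K ^ 2 / 256 * (P * (1 + δ⁻¹))) * (ε ^ 3 * (ε ^ 3)⁻¹) by ring,
            hee, mul_one]
        rw [hl, hr]
        exact mul_le_mul_of_nonneg_left hpv (by positivity)
      have raw2 := genY4 (a := ε) (b := ε * P) (c := (3/4) * ε)
        (d := ((C_B * a₀) ^ 4 * K ^ 2 / 192) * (ε ^ 3)⁻¹ * (1 + δ⁻¹))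
        (t := C_B * a₀ * Real.sqrt (K * δ⁻¹) / 4)
        (x := sA) (y := sE * sN) (z := sDH * sN) (w := sAH * sN)
        hε.le (by positivity) (by positivity) (by positivity)
        (by positivity) hsA0 (by positivity) (by positivity) (by positivity) cond2
      rw [e4A, eYE, eZDH, eW] at raw2
      have i1 : K * δ⁻¹ * E * sM * RR
          ≤ ε * P * (E ^ 2 * N ^ 2) + ε * A ^ 2
            + ((C_B * a₀) ^ 4 * K ^ 4 / 64) * (ε ^ 3)⁻¹ * δ⁻¹ * (M ^ 2 * (AH ^ 2 * N ^ 2)) := by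
        calc K * δ⁻¹ * E * sM * RR
            = 4 * (C_B * a₀ * K * δ⁻¹ / 4) * ((E * (sN * sN)) * sA * (sM * (sAH * sN))) := by
              rw [hRR_def]; ring
          _ ≤ _ := raw1
      have i2 : Real.sqrt (K * δ⁻¹) * (sE * sDH) * RR
          ≤ ε * A ^ 2 + ε * P * (E ^ 2 * N ^ 2) + (3/4) * ε * (DH ^ 2 * N ^ 2)
            + ((C_B * a₀) ^ 4 * K ^ 2 / 192) * (ε ^ 3)⁻¹ * (1 + δ⁻¹) * (AH ^ 2 * N ^ 2) := by
        calc Real.sqrt (K * δ⁻¹) * (sE * sDH) * RR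
            = 4 * (C_B * a₀ * Real.sqrt (K * δ⁻¹) / 4)
              * (sA * (sE * sN) * (sDH * sN) * (sAH * sN)) := by
              rw [hRR_def]; ring
          _ ≤ _ := raw2
      have hexp : (K * δ⁻¹ * E * sM + Real.sqrt (K * δ⁻¹) * (sE * sDH)) * RR
          = K * δ⁻¹ * E * sM * RR + Real.sqrt (K * δ⁻¹) * (sE * sDH) * RR := by ring
      linarith [hT2b, i1, i2]
  -- ============ final assembly ============
  have hepow : ε ^ (-(3:ℝ)) = (ε ^ 3)⁻¹ := by
    rw [show (-(3:ℝ)) = -((3:ℕ):ℝ) by norm_num, Real.rpow_neg hε.le, Real.rpow_natCast]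
  rw [hepow, hIn_dec]
  have hbD : 0 ≤ ε * D ^ 2 := by positivity
  have hbDH : 3 * ε * DH ^ 2 * N ^ 2 ≤ 3 * ε * DH ^ 2 * Xi t :=
    mul_le_mul_of_nonneg_left hXiN (by positivity)
  have hE2' : ε * P * (E ^ 2 * N ^ 2) = ε * P * (Idd * N ^ 2) := by rw [hE2]
  have hCv2 : (2:ℝ) ≤ 2 + (C_B * a₀) ^ 4 / 192 + (C_B * a₀) ^ 4 * Lφ ^ 4 / 36
      + (C_B * a₀) ^ 4 * Lφ ^ 2 / 36 + (C_B * a₀) ^ 4 * K ^ 4 / 64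
      + (C_B * a₀) ^ 4 * K ^ 2 / 192 := by
    have h1 : (0:ℝ) ≤ (C_B * a₀) ^ 4 / 192 := by positivity
    have h2 : (0:ℝ) ≤ (C_B * a₀) ^ 4 * Lφ ^ 4 / 36 := by positivity
    have h3 : (0:ℝ) ≤ (C_B * a₀) ^ 4 * Lφ ^ 2 / 36 := by positivity
    have h4 : (0:ℝ) ≤ (C_B * a₀) ^ 4 * K ^ 4 / 64 := by positivity
    have h5 : (0:ℝ) ≤ (C_B * a₀) ^ 4 * K ^ 2 / 192 := by positivity
    linarith
  have hq : 0 ≤ ε * P * (Idd * N ^ 2) := by positivity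
  have hbE := mul_le_mul_of_nonneg_right hCv2 hq
  have hbk := bucket_aux (CB := (C_B * a₀) ^ 4) (Kc := K) (Lc := Lφ) (M := M) (di := δ⁻¹)
      (by positivity) hK.le hLφ0 hM1 hδi0
  have hq1 : 0 ≤ (ε ^ 3)⁻¹ * (AH ^ 2 * N ^ 2) := by positivity
  have hmul1 := mul_le_mul_of_nonneg_left hbk hq1
  have hAHX : AH ^ 2 * N ^ 2 ≤ AH ^ 2 * Xi t := mul_le_mul_of_nonneg_left hXiN (sq_nonneg AH)
  have hq2 : (ε ^ 3)⁻¹ * (AH ^ 2 * N ^ 2) ≤ (ε ^ 3)⁻¹ * (AH ^ 2 * Xi t) :=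
    mul_le_mul_of_nonneg_left hAHX hei0
  have hbr0 : (0:ℝ) ≤ (2 + (C_B * a₀) ^ 4 / 192 + (C_B * a₀) ^ 4 * Lφ ^ 4 / 36
      + (C_B * a₀) ^ 4 * Lφ ^ 2 / 36 + (C_B * a₀) ^ 4 * K ^ 4 / 64
      + (C_B * a₀) ^ 4 * K ^ 2 / 192) * (1 + M ^ 2 + δ⁻¹ * M ^ 2) := by positivity
  have hmul2 := mul_le_mul_of_nonneg_left hq2 hbr0
  linarith [piece1, piece2a, piece2b, hbD, hbDH, hE2', hbE, hmul1, hmul2]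
end

section
/- Let T > 0, c > 0, let f : [0,T] → [0,∞) be measurable with ∫_0^t f(s) ds < ∞ for every t ∈ [0,T], and let g : [0,∞) → [0,1] be a function with g(x) = 0 for every x ≥ c. Then ∫_0^T f(t) · g((∫_0^t f(s) ds)^{1/2}) dt ≤ c². -/
open MeasureTheory

/-- Let `T > 0`, `c > 0`, let `f : [0,T] → [0,∞)` be measurable with
`∫_0^t f(s) ds < ∞` for every `t ∈ [0,T]`, and let `g : [0,∞) → [0,1]` be a function with
`g(x) = 0` for every `x ≥ c`. Then `∫_0^T f(t) · g((∫_0^t f(s) ds)^{1/2}) dt ≤ c²`. -/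
theorem stmt11 (T c : ℝ) (hT : 0 < T) (hc : 0 < c)
    (f : ℝ → ℝ) (hf_meas : Measurable f)
    (hf_nonneg : ∀ t ∈ Set.Icc (0:ℝ) T, 0 ≤ f t)
    (hf_int : ∀ t ∈ Set.Icc (0:ℝ) T, IntegrableOn f (Set.Ioc 0 t))
    (g : ℝ → ℝ) (hg_map : ∀ x : ℝ, 0 ≤ x → g x ∈ Set.Icc (0:ℝ) 1)
    (hg_zero : ∀ x : ℝ, c ≤ x → g x = 0) :
    (∫ t in Set.Ioc (0:ℝ) T, f t * g (Real.sqrt (∫ s in Set.Ioc (0:ℝ) t, f s))) ≤ c ^ 2 := by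
  by_cases hI : IntegrableOn
      (fun t => f t * g (Real.sqrt (∫ s in Set.Ioc (0:ℝ) t, f s))) (Set.Ioc 0 T) volume
  swap
  · rw [MeasureTheory.integral_undef hI]; positivity
  set F : ℝ → ℝ := fun t => ∫ s in Set.Ioc (0:ℝ) t, f s with hFdef
  have hFmono : ∀ ⦃s t : ℝ⦄, s ∈ Set.Icc (0:ℝ) T → t ∈ Set.Icc (0:ℝ) T → s ≤ t → F s ≤ F t := by
    intro s t hs ht hst
    apply setIntegral_mono_set (hf_int t ht)
    · exact (ae_restrict_iff' measurableSet_Ioc).2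
        (.of_forall fun x hx => hf_nonneg x ⟨hx.1.le, hx.2.trans ht.2⟩)
    · exact (Set.Ioc_subset_Ioc_right hst).eventuallyLE
  have hF0 : F 0 = 0 := by simp [hFdef]
  obtain ⟨τ, hτmem, hτle, hτgt⟩ :
      ∃ τ ∈ Set.Icc (0:ℝ) T, F τ ≤ c ^ 2 ∧ ∀ t ∈ Set.Icc (0:ℝ) T, τ < t → c ^ 2 ≤ F t := by
    by_cases hFT : F T ≤ c ^ 2
    · exact ⟨T, ⟨hT.le, le_rfl⟩, hFT, fun t ht h => absurd h (not_lt.2 ht.2)⟩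
    · have hcont : ContinuousOn F (Set.Icc 0 T) :=
        intervalIntegral.continuousOn_primitive
          ((integrableOn_Icc_iff_integrableOn_Ioc).2 (hf_int T ⟨hT.le, le_rfl⟩))
      have hmem : c ^ 2 ∈ Set.Icc (F 0) (F T) := ⟨by rw [hF0]; positivity, (not_le.1 hFT).le⟩
      obtain ⟨τ, hτ, hFτ⟩ := intermediate_value_Icc hT.le hcont hmem
      exact ⟨τ, hτ, hFτ.le, fun t ht h => hFτ ▸ hFmono hτ ht h.le⟩
  calc (∫ t in Set.Ioc (0:ℝ) T, f t * g (Real.sqrt (F t)))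
      ≤ ∫ t in Set.Ioc (0:ℝ) T, (Set.Iic τ).indicator f t := by
        apply setIntegral_mono_on hI
          ((hf_int T ⟨hT.le, le_rfl⟩).indicator measurableSet_Iic) measurableSet_Ioc
        intro t ht
        by_cases h : t ≤ τ
        · rw [Set.indicator_of_mem (Set.mem_Iic.2 h)]
          have hft : 0 ≤ f t := hf_nonneg t ⟨ht.1.le, ht.2⟩
          have hg1 : g (Real.sqrt (F t)) ≤ 1 := (hg_map _ (Real.sqrt_nonneg _)).2
          calc f t * g (Real.sqrt (F t)) ≤ f t * 1 := mul_le_mul_of_nonneg_left hg1 hft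
          _ = f t := mul_one _
        · rw [Set.indicator_of_notMem (fun hm => h (Set.mem_Iic.1 hm))]
          have h1 : c ^ 2 ≤ F t := hτgt t ⟨ht.1.le, ht.2⟩ (not_le.1 h)
          have h2 : c ≤ Real.sqrt (F t) := by
            have := Real.sqrt_le_sqrt h1
            rwa [Real.sqrt_sq hc.le] at this
          rw [hg_zero _ h2, mul_zero]
    _ = ∫ t in Set.Ioc (0:ℝ) τ, f t := by
        rw [setIntegral_indicator measurableSet_Iic, Set.Ioc_inter_Iic,
          min_eq_right hτmem.2]
    _ ≤ c ^ 2 := hτle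
end

section
/- Let T > 0, m ∈ ℕ, δ > 0, let y₀, w : [0,T] → V be strongly measurable with ∫_0^T ‖y₀(s)‖² ds < ∞ and ∫_0^T ‖w(s)‖² ds < ∞, and let e ∈ V. Then ∫_0^T |⟨B(y₀(s), w(s)), e⟩| φ_m(|y₀(s)|) g_δ(|y₀|_{ξ_s}) ds ≤ C_B a₀ (2δ (m+1) |e| ‖e‖)^{1/2} T^{1/4} (∫_0^T ‖w(s)‖² ds)^{1/2}. -/
open MeasureTheory

set_option maxHeartbeats 1000000 in
/-- Let `T > 0`, `m ∈ ℕ`, `δ > 0`, let `y₀, w : [0,T] → V` be strongly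
measurable with `∫_0^T ‖y₀(s)‖² ds < ∞` and `∫_0^T ‖w(s)‖² ds < ∞`, and let `e ∈ V`. Then
`∫_0^T |⟨B(y₀(s), w(s)), e⟩| φ_m(|y₀(s)|) g_δ(|y₀|_{ξ_s}) ds
  ≤ C_B a₀ (2δ (m+1) |e| ‖e‖)^{1/2} T^{1/4} (∫_0^T ‖w(s)‖² ds)^{1/2}`,
where `|·| = ‖jH ·‖` is the `H`-norm, `‖·‖` the `V`-norm and
`|y₀|_{ξ_s} = (∫_0^s ‖y₀(l)‖² dl)^{1/2}`. -/
theorem stmt13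
    {H V Q : Type*}
    [NormedAddCommGroup H] [InnerProductSpace ℝ H] [TopologicalSpace.SeparableSpace H]
    [NormedAddCommGroup V] [InnerProductSpace ℝ V] [TopologicalSpace.SeparableSpace V]
    [NormedAddCommGroup Q] [NormedSpace ℝ Q]
    (jH : V →L[ℝ] H) (hjH : Function.Injective jH)
    (jQ : V →L[ℝ] Q) (hjQ : Function.Injective jQ)
    (a₀ : ℝ) (ha₀ : 0 < a₀)
    (hQnorm : ∀ v : V, ‖jQ v‖ ^ 2 ≤ a₀ * ‖jH v‖ * ‖v‖)
    (B : V →L[ℝ] V →L[ℝ] V →L[ℝ] ℝ)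
    (C_B : ℝ) (hC_B : 0 < C_B)
    (hB : ∀ u v w : V, |B u v w| ≤ C_B * ‖jQ u‖ * ‖v‖ * ‖jQ w‖)
    (T : ℝ) (hT : 0 < T) (m : ℕ) (δ : ℝ) (hδ : 0 < δ)
    (φ : ℝ → ℝ) (hφ_smooth : ContDiffOn ℝ 2 φ (Set.Ici 0))
    (hφ_map : ∀ x : ℝ, 0 ≤ x → φ x ∈ Set.Icc (0:ℝ) 1)
    (hφ_one : ∀ x ∈ Set.Icc (0:ℝ) (m:ℝ), φ x = 1)
    (hφ_zero : ∀ x : ℝ, (m:ℝ) + 1 ≤ x → φ x = 0)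
    (g : ℝ → ℝ) (hg_smooth : ContDiffOn ℝ 2 g (Set.Ici 0))
    (hg_map : ∀ x : ℝ, 0 ≤ x → g x ∈ Set.Icc (0:ℝ) 1)
    (hg_one : ∀ x ∈ Set.Icc (0:ℝ) δ, g x = 1)
    (hg_zero : ∀ x : ℝ, 2 * δ ≤ x → g x = 0)
    (y₀ w : ℝ → V)
    (hy₀ : StronglyMeasurable y₀) (hw : StronglyMeasurable w)
    (hy₀_int : IntegrableOn (fun s => ‖y₀ s‖ ^ 2) (Set.Ioc 0 T))
    (hw_int : IntegrableOn (fun s => ‖w s‖ ^ 2) (Set.Ioc 0 T))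
    (e : V) :
    (∫ s in Set.Ioc (0:ℝ) T,
        |B (y₀ s) (w s) e| * φ ‖jH (y₀ s)‖ *
          g (Real.sqrt (∫ l in Set.Ioc (0:ℝ) s, ‖y₀ l‖ ^ 2)))
      ≤ C_B * a₀ * (2 * δ * ((m:ℝ) + 1) * ‖jH e‖ * ‖e‖) ^ ((1:ℝ)/2) * T ^ ((1:ℝ)/4) *
        (∫ s in Set.Ioc (0:ℝ) T, ‖w s‖ ^ 2) ^ ((1:ℝ)/2) := by
  classical
  have hnY : Measurable fun s => ‖y₀ s‖ := hy₀.norm.measurable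
  have hnW : Measurable fun s => ‖w s‖ := hw.norm.measurable
  set F : ℝ → ℝ := fun r => ∫ l in Set.Ioc (0:ℝ) (min r T), ‖y₀ l‖ ^ 2 with hFdef
  have hF_mono : Monotone F := by
    intro s t hst
    refine setIntegral_mono_set
      (hy₀_int.mono_set (Set.Ioc_subset_Ioc_right (min_le_right _ _)))
      (Filter.Eventually.of_forall fun l => by positivity)
      (HasSubset.Subset.eventuallyLE (Set.Ioc_subset_Ioc_right (min_le_min hst le_rfl)))
  have hF_meas : Measurable F := hF_mono.measurable
  set A : Set ℝ := Set.Ioc 0 T ∩ {s | F s < 4 * δ ^ 2} with hAdef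
  have hA_meas : MeasurableSet A :=
    measurableSet_Ioc.inter (measurableSet_lt hF_meas measurable_const)
  have hA_sub : A ⊆ Set.Ioc 0 T := Set.inter_subset_left
  set h : ℝ → ℝ := A.indicator fun _ => (1:ℝ) with hhdef
  have hh_meas : Measurable h := measurable_const.indicator hA_meas
  have hh01 : ∀ s, h s = 0 ∨ h s = 1 := fun s => by
    by_cases hs : s ∈ A <;> simp [hhdef, hs]
  have hh_nonneg : ∀ s, 0 ≤ h s := fun s => by
    rcases hh01 s with h0 | h0 <;> rw [h0] <;> norm_num
  have hh_le_one : ∀ s, h s ≤ 1 := fun s => by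
    rcases hh01 s with h0 | h0 <;> rw [h0] <;> norm_num
  have hFeq : ∀ s ∈ Set.Ioc (0:ℝ) T, F s = ∫ l in Set.Ioc (0:ℝ) s, ‖y₀ l‖ ^ 2 := by
    intro s hs
    simp only [hFdef]
    rw [min_eq_left hs.2]
  -- Step D : the integral of ‖y₀‖² over A is at most 4δ²
  have hD : ∫ s in A, ‖y₀ s‖ ^ 2 ≤ 4 * δ ^ 2 := by
    rcases Set.eq_empty_or_nonempty A with hAe | hAne
    · rw [hAe]
      simp only [Measure.restrict_empty, integral_zero_measure]
      positivity
    · obtain ⟨a, ha⟩ := hAne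
      have hbdd : BddAbove A := BddAbove.mono hA_sub bddAbove_Ioc
      have hsT : sSup A ≤ T := csSup_le ⟨a, ha⟩ fun x hx => (hA_sub hx).2
      have hs0 : 0 ≤ sSup A := (hA_sub ha).1.le.trans (le_csSup hbdd ha)
      have hsub2 : A ⊆ Set.Ioc 0 (sSup A) := fun x hx => ⟨(hA_sub hx).1, le_csSup hbdd hx⟩
      have h1 : ∫ s in A, ‖y₀ s‖ ^ 2 ≤ ∫ s in Set.Ioc 0 (sSup A), ‖y₀ s‖ ^ 2 :=
        setIntegral_mono_set (hy₀_int.mono_set (Set.Ioc_subset_Ioc_right hsT))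
          (Filter.Eventually.of_forall fun l => by positivity) hsub2.eventuallyLE
      have hcont : ContinuousOn (fun x => ∫ l in Set.Ioc (0:ℝ) x, ‖y₀ l‖ ^ 2) (Set.Icc 0 T) :=
        intervalIntegral.continuousOn_primitive ((integrableOn_Icc_iff_integrableOn_Ioc enorm_ne_top).2 hy₀_int)
      obtain ⟨u, hu_mono, hu_tend, hu_mem⟩ := exists_seq_tendsto_sSup ⟨a, ha⟩ hbdd
      have htend2 : Filter.Tendsto (fun n => ∫ l in Set.Ioc (0:ℝ) (u n), ‖y₀ l‖ ^ 2)
          Filter.atTop (nhds (∫ l in Set.Ioc (0:ℝ) (sSup A), ‖y₀ l‖ ^ 2)) := by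
        refine Filter.Tendsto.comp (hcont (sSup A) ⟨hs0, hsT⟩) ?_
        refine tendsto_nhdsWithin_of_tendsto_nhds_of_eventually_within _ hu_tend ?_
        exact Filter.Eventually.of_forall fun n => Set.Ioc_subset_Icc_self (hA_sub (hu_mem n))
      have h2 : ∫ l in Set.Ioc (0:ℝ) (sSup A), ‖y₀ l‖ ^ 2 ≤ 4 * δ ^ 2 := by
        refine le_of_tendsto htend2 (Filter.Eventually.of_forall fun n => ?_)
        have hmem := hu_mem n
        have hlt : F (u n) < 4 * δ ^ 2 := hmem.2
        rw [hFeq _ (hA_sub hmem)] at hlt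
        exact hlt.le
      exact h1.trans h2
  -- basic integrability facts
  have hconst_int : IntegrableOn (fun _ => (1:ℝ)) (Set.Ioc (0:ℝ) T) :=
    integrableOn_const measure_Ioc_lt_top.ne
  have hu_meas : Measurable fun s => Real.sqrt ‖y₀ s‖ * h s :=
    (Real.continuous_sqrt.measurable.comp hnY : Measurable fun s => Real.sqrt ‖y₀ s‖).mul hh_meas
  have hint_uv : Integrable (fun s => (Real.sqrt ‖y₀ s‖ * h s) * ‖w s‖)
      (volume.restrict (Set.Ioc (0:ℝ) T)) := by
    refine Integrable.mono' ((hy₀_int.add hconst_int).add hw_int)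
      ((hu_meas.mul hnW).aestronglyMeasurable) (Filter.Eventually.of_forall fun s => ?_)
    have h1 := hh_nonneg s
    have h2 := hh_le_one s
    have h3 : Real.sqrt ‖y₀ s‖ ^ 2 = ‖y₀ s‖ := Real.sq_sqrt (norm_nonneg _)
    rw [Real.norm_of_nonneg (by positivity)]
    simp only [Pi.add_apply]
    have e1 : Real.sqrt ‖y₀ s‖ * h s * ‖w s‖ ≤ Real.sqrt ‖y₀ s‖ * ‖w s‖ := by
      nlinarith [mul_nonneg (mul_nonneg (sub_nonneg.2 h2) (Real.sqrt_nonneg ‖y₀ s‖))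
        (norm_nonneg (w s))]
    have e2 : Real.sqrt ‖y₀ s‖ * ‖w s‖ ≤ (‖y₀ s‖ + ‖w s‖ ^ 2) / 2 := by
      nlinarith [sq_nonneg (Real.sqrt ‖y₀ s‖ - ‖w s‖)]
    have e3 : ‖y₀ s‖ ≤ (‖y₀ s‖ ^ 2 + 1) / 2 := by nlinarith [sq_nonneg (‖y₀ s‖ - 1)]
    have e4 : (0:ℝ) ≤ ‖w s‖ ^ 2 := by positivity
    have e5 : (0:ℝ) ≤ ‖y₀ s‖ ^ 2 := by positivity
    linarith
  have hint_u2 : Integrable (fun s => ‖y₀ s‖ * h s) (volume.restrict (Set.Ioc (0:ℝ) T)) := by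
    refine Integrable.mono' (hy₀_int.add hconst_int)
      (hnY.mul hh_meas).aestronglyMeasurable (Filter.Eventually.of_forall fun s => ?_)
    have h1 := hh_nonneg s
    have h2 := hh_le_one s
    rw [Real.norm_of_nonneg (by positivity)]
    simp only [Pi.add_apply]
    nlinarith [norm_nonneg (y₀ s), sq_nonneg (‖y₀ s‖ - 1)]
  have hint_y2h : Integrable (fun s => ‖y₀ s‖ ^ 2 * h s) (volume.restrict (Set.Ioc (0:ℝ) T)) := by
    refine Integrable.mono' hy₀_int ((hnY.pow_const 2).mul hh_meas).aestronglyMeasurable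
      (Filter.Eventually.of_forall fun s => ?_)
    have h1 := hh_nonneg s
    have h2 := hh_le_one s
    rw [Real.norm_of_nonneg (by positivity)]
    nlinarith [sq_nonneg ‖y₀ s‖]
  -- Memℒp facts
  have hmem_u : MemLp (fun s => Real.sqrt ‖y₀ s‖ * h s) (ENNReal.ofReal 2)
      (volume.restrict (Set.Ioc (0:ℝ) T)) := by
    rw [ENNReal.ofReal_ofNat]
    refine (memLp_two_iff_integrable_sq hu_meas.aestronglyMeasurable).2 ?_
    refine hint_u2.congr (Filter.Eventually.of_forall fun s => ?_)
    rcases hh01 s with h0 | h0 <;>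
      simp [h0, mul_pow, Real.sq_sqrt (norm_nonneg (y₀ s))]
  have hmem_w : MemLp (fun s => ‖w s‖) (ENNReal.ofReal 2)
      (volume.restrict (Set.Ioc (0:ℝ) T)) := by
    rw [ENNReal.ofReal_ofNat]
    exact (memLp_two_iff_integrable_sq hw.norm.aestronglyMeasurable).2 hw_int
  have hmem_u2 : MemLp (fun s => ‖y₀ s‖ * h s) (ENNReal.ofReal 2)
      (volume.restrict (Set.Ioc (0:ℝ) T)) := by
    rw [ENNReal.ofReal_ofNat]
    refine (memLp_two_iff_integrable_sq (hnY.mul hh_meas).aestronglyMeasurable).2 ?_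
    refine hint_y2h.congr (Filter.Eventually.of_forall fun s => ?_)
    rcases hh01 s with h0 | h0 <;> simp [h0, mul_pow]
  have hmem_one : MemLp (fun _ : ℝ => (1:ℝ)) (ENNReal.ofReal 2)
      (volume.restrict (Set.Ioc (0:ℝ) T)) := by
    rw [ENNReal.ofReal_ofNat]
    refine (memLp_two_iff_integrable_sq aestronglyMeasurable_const).2 ?_
    simpa using hconst_int
  have hconj : Real.HolderConjugate 2 2 := Real.holderConjugate_iff.mpr ⟨one_lt_two, by norm_num⟩
  -- Hölder for u · w
  have hH1 : ∫ s in Set.Ioc (0:ℝ) T, (Real.sqrt ‖y₀ s‖ * h s) * ‖w s‖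
      ≤ (∫ s in Set.Ioc (0:ℝ) T, (Real.sqrt ‖y₀ s‖ * h s) ^ (2:ℝ)) ^ (1/(2:ℝ)) *
        (∫ s in Set.Ioc (0:ℝ) T, ‖w s‖ ^ (2:ℝ)) ^ (1/(2:ℝ)) :=
    integral_mul_le_Lp_mul_Lq_of_nonneg hconj
      (Filter.Eventually.of_forall fun s => mul_nonneg (Real.sqrt_nonneg _) (hh_nonneg s))
      (Filter.Eventually.of_forall fun s => norm_nonneg _) hmem_u hmem_w
  simp only [Real.rpow_two] at hH1
  -- Hölder for (‖y₀‖ h) · 1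
  have hH2 : ∫ s in Set.Ioc (0:ℝ) T, (‖y₀ s‖ * h s) * 1
      ≤ (∫ s in Set.Ioc (0:ℝ) T, (‖y₀ s‖ * h s) ^ (2:ℝ)) ^ (1/(2:ℝ)) *
        (∫ s in Set.Ioc (0:ℝ) T, (1:ℝ) ^ (2:ℝ)) ^ (1/(2:ℝ)) :=
    integral_mul_le_Lp_mul_Lq_of_nonneg hconj
      (Filter.Eventually.of_forall fun s => mul_nonneg (norm_nonneg _) (hh_nonneg s))
      (Filter.Eventually.of_forall fun _ => zero_le_one) hmem_u2 hmem_one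
  simp only [Real.rpow_two, mul_one, one_pow] at hH2
  have hvol : ∫ _ in Set.Ioc (0:ℝ) T, (1:ℝ) = T := by
    simp [Real.volume_Ioc, ENNReal.toReal_ofReal hT.le, hT.le]
  have hIA : ∫ s in Set.Ioc (0:ℝ) T, (‖y₀ s‖ * h s) ^ 2 = ∫ s in A, ‖y₀ s‖ ^ 2 := by
    have heq : (fun s => (‖y₀ s‖ * h s) ^ 2) = A.indicator (fun s => ‖y₀ s‖ ^ 2) := by
      funext s
      by_cases hs : s ∈ A <;> simp [hhdef, hs, mul_pow]
    rw [heq, integral_indicator hA_meas, Measure.restrict_restrict hA_meas,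
      Set.inter_eq_self_of_subset_left hA_sub]
  rw [hIA, hvol] at hH2
  -- J ≤ 2δ √T
  have hJ0 : 0 ≤ ∫ s in Set.Ioc (0:ℝ) T, ‖y₀ s‖ * h s :=
    setIntegral_nonneg measurableSet_Ioc fun s _ => mul_nonneg (norm_nonneg _) (hh_nonneg s)
  have hJle : ∫ s in Set.Ioc (0:ℝ) T, ‖y₀ s‖ * h s ≤ 2 * δ * T ^ (1/(2:ℝ)) := by
    refine hH2.trans ?_
    have hstep : (∫ s in A, ‖y₀ s‖ ^ 2) ^ (1/(2:ℝ)) ≤ (4 * δ ^ 2) ^ (1/(2:ℝ)) :=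
      Real.rpow_le_rpow (setIntegral_nonneg hA_meas fun s _ => by positivity) hD (by norm_num)
    have h4δ : (4 * δ ^ 2 : ℝ) ^ (1/(2:ℝ)) = 2 * δ := by
      rw [show (4 * δ ^ 2 : ℝ) = (2 * δ) ^ 2 by ring, ← Real.sqrt_eq_rpow,
        Real.sqrt_sq (by positivity)]
    calc (∫ s in A, ‖y₀ s‖ ^ 2) ^ (1/(2:ℝ)) * T ^ (1/(2:ℝ))
        ≤ (4 * δ ^ 2) ^ (1/(2:ℝ)) * T ^ (1/(2:ℝ)) :=
          mul_le_mul_of_nonneg_right hstep (Real.rpow_nonneg hT.le _)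
      _ = 2 * δ * T ^ (1/(2:ℝ)) := by rw [h4δ]
  -- the pointwise bound
  set K : ℝ := C_B * a₀ * (Real.sqrt ((m:ℝ) + 1) * Real.sqrt (‖jH e‖ * ‖e‖)) with hKdef
  have hK0 : 0 ≤ K := by
    rw [hKdef]; positivity
  have hpt : ∀ s ∈ Set.Ioc (0:ℝ) T,
      |B (y₀ s) (w s) e| * φ ‖jH (y₀ s)‖ *
          g (Real.sqrt (∫ l in Set.Ioc (0:ℝ) s, ‖y₀ l‖ ^ 2))
        ≤ K * ((Real.sqrt ‖y₀ s‖ * h s) * ‖w s‖) := by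
    intro s hs
    have hφ0 := (hφ_map _ (norm_nonneg (jH (y₀ s)))).1
    have hφ1 := (hφ_map _ (norm_nonneg (jH (y₀ s)))).2
    have hg0 := (hg_map _ (Real.sqrt_nonneg (∫ l in Set.Ioc (0:ℝ) s, ‖y₀ l‖ ^ 2))).1
    have hq1 : ‖jQ (y₀ s)‖ * φ ‖jH (y₀ s)‖ ≤ Real.sqrt (a₀ * (((m:ℝ) + 1) * ‖y₀ s‖)) := by
      rcases le_or_gt ‖jH (y₀ s)‖ ((m:ℝ) + 1) with hc | hc
      · have h1 : ‖jQ (y₀ s)‖ * φ ‖jH (y₀ s)‖ ≤ ‖jQ (y₀ s)‖ := by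
          nlinarith [norm_nonneg (jQ (y₀ s))]
        refine h1.trans ?_
        rw [show ‖jQ (y₀ s)‖ = Real.sqrt (‖jQ (y₀ s)‖ ^ 2) from (Real.sqrt_sq (norm_nonneg _)).symm]
        refine Real.sqrt_le_sqrt ?_
        have hq := hQnorm (y₀ s)
        nlinarith [norm_nonneg (y₀ s), mul_nonneg ha₀.le (norm_nonneg (y₀ s))]
      · rw [hφ_zero _ hc.le, mul_zero]
        positivity
    have hq2 : ‖jQ e‖ ≤ Real.sqrt (a₀ * (‖jH e‖ * ‖e‖)) := by
      rw [show ‖jQ e‖ = Real.sqrt (‖jQ e‖ ^ 2) from (Real.sqrt_sq (norm_nonneg _)).symm]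
      refine Real.sqrt_le_sqrt ?_
      simpa [mul_assoc] using hQnorm e
    have hgh : g (Real.sqrt (∫ l in Set.Ioc (0:ℝ) s, ‖y₀ l‖ ^ 2)) ≤ h s := by
      by_cases hcase : F s < 4 * δ ^ 2
      · have hmem : s ∈ A := ⟨hs, hcase⟩
        rw [hhdef, Set.indicator_of_mem hmem]
        exact (hg_map _ (Real.sqrt_nonneg _)).2
      · have hFge : 4 * δ ^ 2 ≤ ∫ l in Set.Ioc (0:ℝ) s, ‖y₀ l‖ ^ 2 := by
          rw [← hFeq s hs]; exact not_lt.1 hcase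
        have h2δ : 2 * δ ≤ Real.sqrt (∫ l in Set.Ioc (0:ℝ) s, ‖y₀ l‖ ^ 2) := by
          rw [show (2 * δ : ℝ) = Real.sqrt ((2 * δ) ^ 2) from (Real.sqrt_sq (by positivity)).symm]
          exact Real.sqrt_le_sqrt (by nlinarith)
        rw [hg_zero _ h2δ]
        exact hh_nonneg s
    have hBs := hB (y₀ s) (w s) e
    calc |B (y₀ s) (w s) e| * φ ‖jH (y₀ s)‖ *
          g (Real.sqrt (∫ l in Set.Ioc (0:ℝ) s, ‖y₀ l‖ ^ 2))
        ≤ (C_B * ‖jQ (y₀ s)‖ * ‖w s‖ * ‖jQ e‖) * φ ‖jH (y₀ s)‖ *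
          g (Real.sqrt (∫ l in Set.Ioc (0:ℝ) s, ‖y₀ l‖ ^ 2)) :=
          mul_le_mul_of_nonneg_right (mul_le_mul_of_nonneg_right hBs hφ0) hg0
      _ = (C_B * ‖w s‖) * ((‖jQ (y₀ s)‖ * φ ‖jH (y₀ s)‖) *
            (‖jQ e‖ * g (Real.sqrt (∫ l in Set.Ioc (0:ℝ) s, ‖y₀ l‖ ^ 2)))) := by ring
      _ ≤ (C_B * ‖w s‖) * (Real.sqrt (a₀ * (((m:ℝ) + 1) * ‖y₀ s‖)) *
            (Real.sqrt (a₀ * (‖jH e‖ * ‖e‖)) * h s)) := by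
          refine mul_le_mul_of_nonneg_left ?_ (by positivity)
          refine mul_le_mul hq1 (mul_le_mul hq2 hgh hg0 (Real.sqrt_nonneg _))
            (mul_nonneg (norm_nonneg _) hg0) (Real.sqrt_nonneg _)
      _ = K * ((Real.sqrt ‖y₀ s‖ * h s) * ‖w s‖) := by
          rw [Real.sqrt_mul ha₀.le, Real.sqrt_mul ha₀.le,
            Real.sqrt_mul (by positivity : (0:ℝ) ≤ (m:ℝ) + 1), hKdef]
          have hss : Real.sqrt a₀ * Real.sqrt a₀ = a₀ := Real.mul_self_sqrt ha₀.le
          linear_combination (C_B * ‖w s‖ * Real.sqrt ((m:ℝ) + 1) * Real.sqrt ‖y₀ s‖ *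
            Real.sqrt (‖jH e‖ * ‖e‖) * h s) * hss
  -- assemble
  have hu_sq : (fun s => (Real.sqrt ‖y₀ s‖ * h s) ^ 2) = fun s => ‖y₀ s‖ * h s := by
    funext s
    rcases hh01 s with h0 | h0 <;>
      simp [h0, mul_pow, Real.sq_sqrt (norm_nonneg (y₀ s))]
  rw [hu_sq] at hH1
  have hW0 : (0:ℝ) ≤ (∫ s in Set.Ioc (0:ℝ) T, ‖w s‖ ^ 2) ^ (1/(2:ℝ)) :=
    Real.rpow_nonneg (setIntegral_nonneg measurableSet_Ioc fun s _ => by positivity) _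
  calc (∫ s in Set.Ioc (0:ℝ) T,
        |B (y₀ s) (w s) e| * φ ‖jH (y₀ s)‖ *
          g (Real.sqrt (∫ l in Set.Ioc (0:ℝ) s, ‖y₀ l‖ ^ 2)))
      ≤ ∫ s in Set.Ioc (0:ℝ) T, K * ((Real.sqrt ‖y₀ s‖ * h s) * ‖w s‖) := by
        refine integral_mono_of_nonneg (Filter.Eventually.of_forall fun s =>
          mul_nonneg (mul_nonneg (abs_nonneg _) (hφ_map _ (norm_nonneg _)).1)
            (hg_map _ (Real.sqrt_nonneg _)).1) (hint_uv.const_mul K) ?_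
        filter_upwards [ae_restrict_mem measurableSet_Ioc] with s hs using hpt s hs
    _ = K * ∫ s in Set.Ioc (0:ℝ) T, (Real.sqrt ‖y₀ s‖ * h s) * ‖w s‖ :=
        integral_const_mul K _
    _ ≤ K * ((∫ s in Set.Ioc (0:ℝ) T, ‖y₀ s‖ * h s) ^ (1/(2:ℝ)) *
          (∫ s in Set.Ioc (0:ℝ) T, ‖w s‖ ^ 2) ^ (1/(2:ℝ))) :=
        mul_le_mul_of_nonneg_left hH1 hK0
    _ ≤ K * ((2 * δ * T ^ (1/(2:ℝ))) ^ (1/(2:ℝ)) *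
          (∫ s in Set.Ioc (0:ℝ) T, ‖w s‖ ^ 2) ^ (1/(2:ℝ))) := by
        refine mul_le_mul_of_nonneg_left (mul_le_mul_of_nonneg_right ?_ hW0) hK0
        exact Real.rpow_le_rpow hJ0 hJle (by norm_num)
    _ = C_B * a₀ * (2 * δ * ((m:ℝ) + 1) * ‖jH e‖ * ‖e‖) ^ ((1:ℝ)/2) * T ^ ((1:ℝ)/4) *
          (∫ s in Set.Ioc (0:ℝ) T, ‖w s‖ ^ 2) ^ ((1:ℝ)/2) := by
        rw [hKdef,
          Real.mul_rpow (x := 2*δ) (y := T ^ (1/(2:ℝ))) (by positivity)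
            (Real.rpow_nonneg hT.le _),
          show (2 * δ * ((m:ℝ) + 1) * ‖jH e‖ * ‖e‖ : ℝ)
            = 2 * δ * (((m:ℝ)+1) * (‖jH e‖ * ‖e‖)) by ring,
          Real.mul_rpow (x := 2*δ) (y := ((m:ℝ)+1) * (‖jH e‖ * ‖e‖)) (by positivity)
            (by positivity),
          Real.mul_rpow (x := (m:ℝ)+1) (y := ‖jH e‖ * ‖e‖) (by positivity) (by positivity),
          ← Real.rpow_mul hT.le,
          show (1:ℝ)/2 * (1/2) = 1/4 by norm_num,
          Real.sqrt_eq_rpow, Real.sqrt_eq_rpow]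
        ring
end
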